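/- arXiv:0903.3342 — 6 statements merged into one kernel-verified Lean document; each statement's English description precedes it below -/
import Mathlib

section
/- For every n ≥ 1, (n!/2^n) · Σ_{T ∈ B(n)} ∏_{v ∈ T} (1 + 1/h_v) = (n+1)^(n-1), where B(n) is the set of binary trees with n vertices. -/
/-- Binary trees: each vertex has an ordered pair of (possibly empty) subtrees. -/
inductive BTree : Type
  | leaf : BTree
  | node : BTree → BTree → BTree

namespace BTree

/-- The number of vertices of a binary tree. -/
def size : BTree → ℕ
  | leaf => 0
  | node l r => size l + size r + 1

/-- The multiset of hook lengths of a binary tree: the hook length of a vertex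
is the number of its descendants, counting the vertex itself. -/
def hooks : BTree → Multiset ℕ+
  | leaf => 0
  | node l r => ⟨size l + size r + 1, Nat.succ_pos _⟩ ::ₘ (hooks l + hooks r)

end BTree

namespace Postnikov

open Polynomial Finset

/-! ### The weight of a tree -/

noncomputable def W (t : BTree) : ℚ := (t.hooks.map fun h => (1 : ℚ) + 1 / (h : ℚ)).prod

lemma W_leaf : W .leaf = 1 := by simp [W, BTree.hooks]

lemma W_node (l r : BTree) :
    W (.node l r) = (1 + 1 / ((l.size + r.size + 1 : ℕ) : ℚ)) * (W l * W r) := by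
  have h : BTree.hooks (.node l r)
      = ((l.size + r.size).succPNat ::ₘ (l.hooks + r.hooks)) := rfl
  simp [W, h, mul_assoc]

/-! ### Decidable equality and the finset of trees of a given size -/

def beq : BTree → BTree → Bool
  | .leaf, .leaf => true
  | .node a b, .node c d => beq a c && beq b d
  | _, _ => false

lemma beq_iff : ∀ a b, beq a b = true ↔ a = b
  | .leaf, .leaf => by simp [beq]
  | .leaf, .node _ _ => by simp [beq]
  | .node _ _, .leaf => by simp [beq]
  | .node a b, .node c d => by
      simp [beq, Bool.and_eq_true, beq_iff a c, beq_iff b d]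

instance : DecidableEq BTree := fun a b => decidable_of_iff _ (beq_iff a b)

def treesOf : ℕ → Finset BTree
  | 0 => {BTree.leaf}
  | n + 1 =>
    (Finset.range (n + 1)).attach.biUnion fun a =>
      ((treesOf a.1) ×ˢ (treesOf (n - a.1))).image fun p => BTree.node p.1 p.2
  decreasing_by
  · exact Nat.lt_succ_of_le (Nat.le_of_lt_succ (Finset.mem_range.mp a.2))
  · exact Nat.lt_succ_of_le (Nat.sub_le _ _)

lemma mem_treesOf : ∀ n (t : BTree), t ∈ treesOf n ↔ t.size = n := by
  intro n
  induction n using Nat.strong_induction_on with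
  | _ n ih =>
    intro t
    match n, t with
    | 0, .leaf => simp [treesOf, BTree.size]
    | 0, .node l r => simp [treesOf, BTree.size]
    | n + 1, .leaf =>
      simp only [treesOf, Finset.mem_biUnion, Finset.mem_image, Finset.mem_attach, true_and]
      constructor
      · rintro ⟨a, p, -, h⟩; cases h
      · intro h; cases h
    | n + 1, .node l r =>
      simp only [treesOf, Finset.mem_biUnion, Finset.mem_image, Finset.mem_attach, true_and,
        Finset.mem_product]
      constructor
      · rintro ⟨a, ⟨x, y⟩, ⟨hx, hy⟩, h⟩
        cases h
        rw [ih a.1 (Nat.lt_succ_of_le (Nat.le_of_lt_succ (Finset.mem_range.mp a.2)))] at hx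
        rw [ih (n - a.1) (Nat.lt_succ_of_le (Nat.sub_le _ _))] at hy
        have ha := Nat.le_of_lt_succ (Finset.mem_range.mp a.2)
        simp [BTree.size, hx, hy, Nat.add_sub_cancel' ha]
      · intro h
        have hsz : l.size + r.size = n := by
          simpa [BTree.size] using h
        have hl : l.size ≤ n := le_trans (Nat.le_add_right _ _) hsz.le
        refine ⟨⟨l.size, Finset.mem_range.mpr (Nat.lt_succ_of_le hl)⟩, ⟨l, r⟩, ⟨?_, ?_⟩, rfl⟩
        · rw [ih l.size (Nat.lt_succ_of_le hl)]
        · rw [ih (n - l.size) (Nat.lt_succ_of_le (Nat.sub_le _ _))]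
          show r.size = n - l.size
          omega

/-! ### The total weight of trees of size `n` and its recurrence -/

noncomputable def S (n : ℕ) : ℚ := ∑ t ∈ treesOf n, W t

lemma S_zero : S 0 = 1 := by simp [S, treesOf, W_leaf]

lemma S_succ (n : ℕ) :
    S (n + 1) = (1 + 1 / ((n + 1 : ℕ) : ℚ)) * ∑ a ∈ Finset.range (n + 1), S a * S (n - a) := by
  have hdisj :
      (↑(Finset.range (n + 1)).attach : Set {x // x ∈ Finset.range (n + 1)}).PairwiseDisjoint
        (fun a => ((treesOf a.1) ×ˢ (treesOf (n - a.1))).image fun p => BTree.node p.1 p.2) := by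
    intro a _ b _ hab
    simp only [Function.onFun]
    rw [Finset.disjoint_left]
    rintro t ht ht'
    simp only [Finset.mem_image, Finset.mem_product] at ht ht'
    obtain ⟨⟨x, y⟩, ⟨hx, -⟩, rfl⟩ := ht
    obtain ⟨⟨x', y'⟩, ⟨hx', -⟩, he⟩ := ht'
    cases he
    rw [mem_treesOf] at hx hx'
    exact hab (Subtype.ext (hx.symm.trans hx'))
  have step : ∀ a : {x // x ∈ Finset.range (n + 1)},
      (∑ t ∈ ((treesOf a.1) ×ˢ (treesOf (n - a.1))).image (fun p => BTree.node p.1 p.2), W t)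
        = (1 + 1 / ((n + 1 : ℕ) : ℚ)) * (S a.1 * S (n - a.1)) := by
    intro a
    have ha : a.1 ≤ n := Nat.le_of_lt_succ (Finset.mem_range.mp a.2)
    rw [Finset.sum_image (by rintro ⟨x, y⟩ - ⟨x', y'⟩ - h; cases h; rfl)]
    calc ∑ p ∈ (treesOf a.1) ×ˢ (treesOf (n - a.1)), W (BTree.node p.1 p.2)
        = ∑ p ∈ (treesOf a.1) ×ˢ (treesOf (n - a.1)),
            (1 + 1 / ((n + 1 : ℕ) : ℚ)) * (W p.1 * W p.2) := by
          refine Finset.sum_congr rfl ?_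
          rintro ⟨x, y⟩ hp
          rw [Finset.mem_product] at hp
          have hx : x.size = a.1 := (mem_treesOf _ _).mp hp.1
          have hy : y.size = n - a.1 := (mem_treesOf _ _).mp hp.2
          have hxy : x.size + y.size = n := by omega
          rw [W_node, hxy]
      _ = (1 + 1 / ((n + 1 : ℕ) : ℚ)) * (S a.1 * S (n - a.1)) := by
          rw [← Finset.mul_sum]
          congr 1
          rw [S, S, Finset.sum_mul_sum]
          exact Finset.sum_product _ _ fun p => W p.1 * W p.2
  rw [S, treesOf, Finset.sum_biUnion hdisj,
    Finset.sum_congr rfl fun a _ => step a, ← Finset.mul_sum]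
  congr 1
  exact Finset.sum_attach (Finset.range (n + 1)) fun a => S a * S (n - a)

lemma S_succ' (n : ℕ) :
    ((n : ℚ) + 1) * S (n + 1)
      = ((n : ℚ) + 2) * ∑ a ∈ Finset.range (n + 1), S a * S (n - a) := by
  rw [S_succ]
  have h : ((n : ℚ) + 1) ≠ 0 := by positivity
  have hcoef : ((n : ℚ) + 1) * (1 + 1 / (((n : ℕ) : ℚ) + 1)) = (n : ℚ) + 2 := by
    field_simp
    ring
  push_cast
  rw [← mul_assoc, hcoef]

/-! ### Abel polynomials -/

noncomputable def ab : ℕ → Polynomial ℚ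
  | 0 => 1
  | n + 1 => X * (X + C ((n : ℚ) + 1)) ^ n

lemma ab_eval_zero (n : ℕ) : (ab (n + 1)).eval 0 = 0 := by simp [ab]

lemma poly_ext {p q : Polynomial ℚ} (h1 : derivative p = derivative q)
    (h2 : p.eval 0 = q.eval 0) : p = q := by
  have h3 : derivative (p - q) = 0 := by rw [derivative_sub, h1, sub_self]
  have h4 := Polynomial.eq_C_of_derivative_eq_zero h3
  have h5 : (p - q).coeff 0 = 0 := by
    rw [Polynomial.coeff_zero_eq_eval_zero, eval_sub, h2, sub_self]
  rw [h5, map_zero] at h4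
  exact sub_eq_zero.mp h4

lemma deriv_ab (n : ℕ) :
    derivative (ab (n + 1)) = ((n : ℚ) + 1) • ((ab n).comp (X + 1)) := by
  cases n with
  | zero => simp [ab]
  | succ k =>
    simp only [ab]
    rw [derivative_mul, derivative_X, derivative_X_add_C_pow]
    simp only [mul_comp, X_comp, pow_comp, add_comp, C_comp, one_comp, smul_eq_C_mul,
      Nat.add_sub_cancel]
    push_cast
    simp only [map_add, map_one]
    ring

lemma ab_add (n : ℕ) (y : ℚ) :
    (ab n).comp (X + C y) =
      ∑ k ∈ Finset.range (n + 1), C ((n.choose k : ℚ) * (ab (n - k)).eval y) * ab k := by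
  induction n with
  | zero => simp [ab]
  | succ n ih =>
    apply poly_ext
    · rw [derivative_comp, deriv_ab]
      have hd : derivative (X + C y) = 1 := by simp
      rw [hd, one_mul, smul_comp, comp_assoc]
      have hXc : (X + (1 : ℚ[X])).comp (X + C y) = (X + C y).comp (X + 1) := by
        simp only [add_comp, X_comp, one_comp, C_comp]; ring
      rw [hXc, ← comp_assoc, ih, Polynomial.sum_comp, derivative_sum]
      have hterm : ∀ k, derivative (C (((n+1).choose k : ℚ) * (ab (n + 1 - k)).eval y) * ab k)
          = C (((n+1).choose k : ℚ) * (ab (n + 1 - k)).eval y) * derivative (ab k) := by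
        intro k
        rw [derivative_mul, derivative_C, zero_mul, zero_add]
      rw [Finset.sum_congr rfl fun k _ => hterm k,
        Finset.sum_range_succ'
          (fun k => C (((n+1).choose k : ℚ) * (ab (n + 1 - k)).eval y) * derivative (ab k))
          (n + 1)]
      have hab0 : derivative (ab 0) = 0 := by simp [ab]
      rw [hab0, mul_zero, add_zero, Finset.smul_sum]
      refine Finset.sum_congr rfl ?_
      intro k hk
      have hsub : n + 1 - (k + 1) = n - k := by omega
      rw [hsub, deriv_ab, mul_comp, C_comp, smul_eq_C_mul, smul_eq_C_mul,
        ← mul_assoc, ← mul_assoc, ← C_mul, ← C_mul]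
      congr 1
      have hzc : (((n+1).choose (k+1) : ℕ) : ℚ) * ((k : ℚ) + 1)
          = ((n : ℚ) + 1) * ((n.choose k : ℕ) : ℚ) := by
        have h := Nat.add_one_mul_choose_eq n k
        have h2 : ((Nat.succ n * n.choose k : ℕ) : ℚ)
            = (((n+1).choose (k+1) * (k+1) : ℕ) : ℚ) := by
          rw [h]
        push_cast at h2
        linarith
      rw [C_inj]
      linear_combination (-(ab (n - k)).eval y) * hzc
    · rw [eval_comp]
      simp only [eval_add, eval_X, eval_C, zero_add]
      rw [eval_finset_sum,
        Finset.sum_range_succ'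
          (fun k => eval 0 (C (((n+1).choose k : ℚ) * (ab (n + 1 - k)).eval y) * ab k)) (n + 1)]
      simp only [eval_mul, eval_C]
      rw [Finset.sum_congr rfl fun k hk => by rw [ab_eval_zero k, mul_zero]]
      simp [ab]

lemma ab_eval_one (n : ℕ) : (ab (n + 1)).eval 1 = ((n : ℚ) + 2) ^ n := by
  simp only [ab, eval_mul, eval_X, eval_pow, eval_add, eval_C, one_mul]
  ring_nf

lemma key (n : ℕ) : ((n : ℚ) + 2) * (ab n).eval 2 = 2 * (ab (n + 1)).eval 1 := by
  cases n with
  | zero => simp [ab]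
  | succ m =>
    rw [ab_eval_one]
    simp only [ab, eval_mul, eval_X, eval_pow, eval_add, eval_C]
    push_cast
    ring

/-! ### The closed form for `S` -/

lemma S_eq : ∀ n : ℕ, (n.factorial : ℚ) * S n = 2 ^ n * (ab n).eval 1 := by
  intro n
  induction n using Nat.strong_induction_on with
  | _ n ih =>
    match n with
    | 0 => simp [S_zero, ab]
    | n + 1 =>
      have hsum : (n.factorial : ℚ) * ∑ a ∈ Finset.range (n + 1), S a * S (n - a)
          = 2 ^ n * (ab n).eval 2 := by
        have h2 : (ab n).eval 2
            = ∑ k ∈ Finset.range (n + 1),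
                (n.choose k : ℚ) * (ab (n - k)).eval 1 * (ab k).eval 1 := by
          have h := congrArg (eval 1) (ab_add n 1)
          rw [eval_comp] at h
          simp only [eval_add, eval_X, eval_C, eval_finset_sum, eval_mul] at h
          norm_num at h
          rw [h]
        rw [h2, Finset.mul_sum, Finset.mul_sum]
        refine Finset.sum_congr rfl ?_
        intro a ha
        have ha' : a ≤ n := Nat.le_of_lt_succ (Finset.mem_range.mp ha)
        have iha := ih a (Nat.lt_succ_of_le ha')
        have ihb := ih (n - a) (Nat.lt_succ_of_le (Nat.sub_le _ _))
        have hfact : ((n.choose a : ℕ) : ℚ) * (a.factorial : ℚ) * ((n - a).factorial : ℚ)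
            = (n.factorial : ℚ) := by
          exact_mod_cast Nat.choose_mul_factorial_mul_factorial ha'
        have h2pow : (2 : ℚ) ^ a * 2 ^ (n - a) = 2 ^ n := by
          rw [← pow_add]
          congr 1
          omega
        have hane : (a.factorial : ℚ) ≠ 0 := by positivity
        have hbne : ((n - a).factorial : ℚ) ≠ 0 := by positivity
        -- goal : ↑n! * (S a * S (n-a)) = 2^n * (choose * e_{n-a} * e_a)
        have key1 : (a.factorial : ℚ) * ((n - a).factorial : ℚ) *
            ((n.factorial : ℚ) * (S a * S (n - a)))
            = (a.factorial : ℚ) * ((n - a).factorial : ℚ) *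
              (2 ^ n * ((n.choose a : ℚ) * (ab (n - a)).eval 1 * (ab a).eval 1)) := by
          linear_combination ((n.factorial : ℚ) * (((n - a).factorial : ℚ) * S (n - a))) * iha
            + ((n.factorial : ℚ) * 2 ^ a * (ab a).eval 1) * ihb
            + (-(2 : ℚ) ^ n * (ab a).eval 1 * (ab (n - a)).eval 1) * hfact
            + ((n.factorial : ℚ) * (ab a).eval 1 * (ab (n - a)).eval 1) * h2pow
        exact mul_left_cancel₀ (mul_ne_zero hane hbne) key1
      have hS := S_succ' n
      have hk := key n
      have hfs : ((n + 1).factorial : ℚ) = ((n : ℚ) + 1) * (n.factorial : ℚ) := by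
        rw [Nat.factorial_succ]
        push_cast
        ring
      rw [hfs]
      calc ((n : ℚ) + 1) * (n.factorial : ℚ) * S (n + 1)
          = (n.factorial : ℚ) * (((n : ℚ) + 1) * S (n + 1)) := by ring
        _ = (n.factorial : ℚ) * (((n : ℚ) + 2)
              * ∑ a ∈ Finset.range (n + 1), S a * S (n - a)) := by rw [hS]
        _ = ((n : ℚ) + 2) * ((n.factorial : ℚ)
              * ∑ a ∈ Finset.range (n + 1), S a * S (n - a)) := by ring
        _ = ((n : ℚ) + 2) * (2 ^ n * (ab n).eval 2) := by rw [hsum]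
        _ = 2 ^ n * (((n : ℚ) + 2) * (ab n).eval 2) := by ring
        _ = 2 ^ n * (2 * (ab (n + 1)).eval 1) := by rw [hk]
        _ = 2 ^ (n + 1) * (ab (n + 1)).eval 1 := by ring

end Postnikov

/-- Postnikov's hook length formula for binary trees. -/
theorem postnikov_hook_formula (n : ℕ) (hn : 1 ≤ n) :
    (n.factorial : ℚ) / 2 ^ n *
      ∑ᶠ T : {t : BTree // t.size = n},
        ((T : BTree).hooks.map fun h => (1 : ℚ) + 1 / (h : ℚ)).prod
    = ((n : ℚ) + 1) ^ (n - 1) := by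
  obtain ⟨m, rfl⟩ : ∃ m, n = m + 1 := ⟨n - 1, by omega⟩
  have hW : (fun T : {t : BTree // t.size = m + 1} =>
      ((T : BTree).hooks.map fun h => (1 : ℚ) + 1 / (h : ℚ)).prod)
      = fun T : {t : BTree // t.size = m + 1} => Postnikov.W (T : BTree) := rfl
  have hfs : ∑ᶠ T : {t : BTree // t.size = m + 1}, Postnikov.W (T : BTree)
      = Postnikov.S (m + 1) := by
    rw [finsum_subtype_eq_finsum_cond]
    have hset : {t : BTree | t.size = m + 1} = ↑(Postnikov.treesOf (m + 1)) := by
      ext t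
      simp [Postnikov.mem_treesOf]
    calc (∑ᶠ (t : BTree) (_ : t.size = m + 1), Postnikov.W t)
        = ∑ᶠ t ∈ {t : BTree | t.size = m + 1}, Postnikov.W t := rfl
      _ = ∑ᶠ t ∈ (↑(Postnikov.treesOf (m + 1)) : Set BTree), Postnikov.W t := by rw [hset]
      _ = ∑ t ∈ Postnikov.treesOf (m + 1), Postnikov.W t := finsum_mem_coe_finset _ _
      _ = Postnikov.S (m + 1) := rfl
  rw [hW, hfs]
  have hS := Postnikov.S_eq (m + 1)
  have he := Postnikov.ab_eval_one m
  have h2 : ((2 : ℚ) ^ (m + 1)) ≠ 0 := by positivity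
  have hgoal : ((m + 1 : ℕ) : ℚ) + 1 = (m : ℚ) + 2 := by push_cast; ring
  rw [Nat.add_sub_cancel, hgoal, ← he]
  field_simp
  linear_combination hS
end

section
/- Suppose ρ : ℕ⁺ → K is a weight function and f(x) ∈ K[[x]] satisfies 1 + Σ_{n≥1} (Σ_{T ∈ T_k(n)} ∏_{v ∈ T} ρ(h_v)) x^n = f(x), where T_k(n) is the set of k-ary trees with n vertices. Then for all n ≥ 1 with [x^{n-1}]f(x)^k ≠ 0, ρ(n) = [x^n]f(x) / [x^{n-1}]f(x)^k. -/
/-- `k`-ary trees: each vertex has `k` linearly ordered (possibly empty) subtrees. -/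
inductive KTree (k : ℕ) : Type
  | leaf : KTree k
  | node : (Fin k → KTree k) → KTree k

namespace KTree

/-- The number of vertices of a `k`-ary tree. -/
def size {k : ℕ} : KTree k → ℕ
  | leaf => 0
  | node c => (∑ i, size (c i)) + 1

/-- The multiset of hook lengths of a `k`-ary tree: the hook length of a vertex
is the number of its descendants, counting the vertex itself. -/
def hooks {k : ℕ} : KTree k → Multiset ℕ+
  | leaf => 0
  | node c => ⟨(∑ i, size (c i)) + 1, Nat.succ_pos _⟩ ::ₘ ∑ i, hooks (c i)

end KTree
namespace KTree

variable {k : ℕ}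

lemma finite_setOf_size_le (k : ℕ) : ∀ n : ℕ, {t : KTree k | t.size ≤ n}.Finite := by
  intro n
  induction n with
  | zero =>
    apply Set.Finite.subset (Set.finite_singleton leaf)
    rintro (_ | c) ht
    · simp
    · simp [size] at ht
  | succ n ih =>
    have h1 : {c : Fin k → KTree k | ∀ i, (c i).size ≤ n}.Finite := by
      have := Set.Finite.pi (fun _ : Fin k => ih)
      exact this.subset (by intro c hc; simp [Set.mem_pi]; exact hc)
    apply Set.Finite.subset ((h1.image node).insert leaf)
    rintro (_ | c) ht
    · exact Set.mem_insert _ _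
    · refine Set.mem_insert_of_mem _ ⟨c, ?_, rfl⟩
      intro i
      simp only [Set.mem_setOf_eq, size] at ht ⊢
      have hle : size (c i) ≤ ∑ j, size (c j) :=
        Finset.single_le_sum (f := fun j => size (c j)) (fun j _ => Nat.zero_le _)
          (Finset.mem_univ i)
      omega

instance (n : ℕ) : Finite {t : KTree k // t.size = n} := by
  have := finite_setOf_size_le k n
  exact (this.subset (fun t ht => le_of_eq ht)).to_subtype

noncomputable instance (n : ℕ) : Fintype {t : KTree k // t.size = n} := Fintype.ofFinite _

instance (j n : ℕ) : Finite {c : Fin j → KTree k // ∑ i, (c i).size = n} := by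
  have h1 : {c : Fin j → KTree k | ∀ i, (c i).size ≤ n}.Finite := by
    have := Set.Finite.pi (fun _ : Fin j => finite_setOf_size_le k n)
    exact this.subset (by intro c hc; simp [Set.mem_pi]; exact hc)
  refine (h1.subset ?_).to_subtype
  intro c hc i
  have : ∑ j, size (c j) = n := hc
  have hle : size (c i) ≤ ∑ j, size (c j) :=
    Finset.single_le_sum (f := fun j => size (c j)) (fun j _ => Nat.zero_le _)
      (Finset.mem_univ i)
  simpa [this] using hle

noncomputable instance (j n : ℕ) : Fintype {c : Fin j → KTree k // ∑ i, (c i).size = n} :=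
  Fintype.ofFinite _

end KTree
namespace KTree

variable {k : ℕ} {K : Type*} [Field K]

/-- The weight of a tree. -/
def wt (ρ : ℕ+ → K) (t : KTree k) : K := (t.hooks.map fun h => ρ h).prod

lemma wt_leaf (ρ : ℕ+ → K) : wt ρ (leaf : KTree k) = 1 := by simp [wt, hooks]

lemma map_sum_multiset (ρ : ℕ+ → K) (s : Finset (Fin k)) (g : Fin k → Multiset ℕ+) :
    ((∑ i ∈ s, g i).map fun h => ρ h).prod = ∏ i ∈ s, ((g i).map fun h => ρ h).prod := by
  classical
  induction s using Finset.induction with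
  | empty => simp
  | @insert a s hni ih =>
    rw [Finset.sum_insert hni, Finset.prod_insert hni, Multiset.map_add, Multiset.prod_add, ih]

lemma wt_node (ρ : ℕ+ → K) (c : Fin k → KTree k) :
    wt ρ (node c) = ρ ⟨(∑ i, size (c i)) + 1, Nat.succ_pos _⟩ * ∏ i, wt ρ (c i) := by
  unfold wt
  erw [show hooks (node c) = (⟨(∑ i, size (c i)) + 1, Nat.succ_pos _⟩ ::ₘ ∑ i, hooks (c i))
    from rfl, Multiset.map_cons, Multiset.prod_cons, map_sum_multiset]

variable (ρ : ℕ+ → K) (f : PowerSeries K)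

/-- Lemma A : all coefficients of `f` are tree sums. -/
lemma coeff_eq_tree_sum (h0 : PowerSeries.constantCoeff f = 1)
    (hf : ∀ n : ℕ, 1 ≤ n → PowerSeries.coeff n f =
      ∑ᶠ T : {t : KTree k // t.size = n}, ((T : KTree k).hooks.map fun h => ρ h).prod)
    (m : ℕ) :
    PowerSeries.coeff m f = ∑ t : {t : KTree k // t.size = m}, wt ρ t.1 := by
  rcases Nat.eq_zero_or_pos m with rfl | hm
  · haveI : Subsingleton {t : KTree k // t.size = 0} := by
      constructor
      rintro ⟨(_ | c), h1⟩ ⟨(_ | d), h2⟩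
      · rfl
      · simp [size] at h2
      · simp [size] at h1
      · simp [size] at h1
    rw [Fintype.sum_subsingleton _ (⟨leaf, rfl⟩ : {t : KTree k // t.size = 0})]
    simpa [wt_leaf] using h0
  · rw [hf m hm, finsum_eq_sum_of_fintype]
    rfl

/-- Lemma B : coefficients of powers of `f` are sums over tuples of trees. -/
lemma coeff_pow_eq_tuple_sum (h0 : PowerSeries.constantCoeff f = 1)
    (hf : ∀ n : ℕ, 1 ≤ n → PowerSeries.coeff n f =
      ∑ᶠ T : {t : KTree k // t.size = n}, ((T : KTree k).hooks.map fun h => ρ h).prod)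
    (j m : ℕ) :
    PowerSeries.coeff m (f ^ j) =
      ∑ c : {c : Fin j → KTree k // ∑ i, (c i).size = m}, ∏ i, wt ρ (c.1 i) := by
  induction j generalizing m with
  | zero =>
    rw [pow_zero, PowerSeries.coeff_one]
    rcases Nat.eq_zero_or_pos m with rfl | hm
    · haveI : Subsingleton {c : Fin 0 → KTree k // ∑ i, (c i).size = 0} := by
        constructor; rintro ⟨c, _⟩ ⟨d, _⟩
        exact Subtype.ext (funext fun i => i.elim0)
      rw [Fintype.sum_subsingleton _
        (⟨fun i => i.elim0, by simp⟩ : {c : Fin 0 → KTree k // ∑ i, (c i).size = 0})]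
      simp
    · haveI : IsEmpty {c : Fin 0 → KTree k // ∑ i, (c i).size = m} := by
        constructor; rintro ⟨c, hc⟩
        simp only [Finset.univ_eq_empty, Finset.sum_empty] at hc
        omega
      rw [if_neg (by omega)]
      exact (Fintype.sum_empty _).symm
  | succ j ih =>
    rw [pow_succ, PowerSeries.coeff_mul]
    have hstep : ∀ p ∈ Finset.HasAntidiagonal.antidiagonal m,
        (PowerSeries.coeff p.1 (f ^ j)) * (PowerSeries.coeff p.2 f) =
        ∑ c ∈ Finset.univ.filter
            (fun c : {c : Fin (j+1) → KTree k // ∑ i, (c i).size = m} =>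
              ((∑ i : Fin j, (c.1 i.castSucc).size, (c.1 (Fin.last j)).size) : ℕ × ℕ) = p),
          ∏ i, wt ρ (c.1 i) := by
      intro p hp
      have hpm : p.1 + p.2 = m := Finset.HasAntidiagonal.mem_antidiagonal.mp hp
      rw [ih, coeff_eq_tree_sum ρ f h0 hf, Finset.sum_mul_sum]
      rw [← Fintype.sum_prod_type']
      refine (Finset.sum_bij'
        (i := fun (x : {c : Fin j → KTree k // ∑ i, (c i).size = p.1} ×
            {t : KTree k // t.size = p.2}) _ =>
          (⟨Fin.snoc (fun y => x.1.1 y) x.2.1, by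
            rw [Fin.sum_univ_castSucc]
            simp only [Fin.snoc_castSucc, Fin.snoc_last]
            rw [x.1.2, x.2.2, hpm]⟩ : {c : Fin (j+1) → KTree k // ∑ i, (c i).size = m}))
        (j := fun c hc =>
          (⟨fun y => c.1 y.castSucc, by
              have := (Finset.mem_filter.mp hc).2
              exact (Prod.mk.injEq _ _ _ _ ▸ this).1⟩,
           ⟨c.1 (Fin.last j), by
              have := (Finset.mem_filter.mp hc).2
              exact (Prod.mk.injEq _ _ _ _ ▸ this).2⟩))
        ?_ ?_ ?_ ?_ ?_)
      · intro x _
        simp only [Finset.mem_filter, Finset.mem_univ, true_and]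
        ext
        · simp [Fin.snoc_castSucc, x.1.2]
        · simp [Fin.snoc_last, x.2.2]
      · intro c hc
        exact Finset.mem_univ _
      · intro x _
        ext y
        · simp [Fin.snoc_castSucc]
        · simp [Fin.snoc_last]
      · intro c hc
        refine Subtype.ext (funext fun y => ?_)
        refine Fin.lastCases ?_ ?_ y
        · simp [Fin.snoc_last]
        · intro y; simp [Fin.snoc_castSucc]
      · intro x _
        rw [Fin.prod_univ_castSucc]
        simp [Fin.snoc_castSucc, Fin.snoc_last]
    rw [Finset.sum_congr rfl hstep]
    rw [Finset.sum_fiberwise_of_maps_to (fun c _ => Finset.HasAntidiagonal.mem_antidiagonal.mpr (by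
      exact (Fin.sum_univ_castSucc (fun x => (c.1 x).size)).symm.trans c.2))]

end KTree

/-- Han's expansion formula for `k`-ary trees. -/
theorem expansion_formula_kary {K : Type*} [Field K] (k : ℕ) (ρ : ℕ+ → K)
    (f : PowerSeries K) (h0 : PowerSeries.constantCoeff f = 1)
    (hf : ∀ n : ℕ, 1 ≤ n → PowerSeries.coeff n f =
      ∑ᶠ T : {t : KTree k // t.size = n}, ((T : KTree k).hooks.map fun h => ρ h).prod)
    (n : ℕ+) (hne : PowerSeries.coeff ((n : ℕ) - 1) (f ^ k) ≠ 0) :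
    ρ n = PowerSeries.coeff (n : ℕ) f / PowerSeries.coeff ((n : ℕ) - 1) (f ^ k) := by
  have hn1 : 1 ≤ (n : ℕ) := n.2
  have key : PowerSeries.coeff (n : ℕ) f =
      ρ n * PowerSeries.coeff ((n : ℕ) - 1) (f ^ k) := by
    rw [KTree.coeff_eq_tree_sum ρ f h0 hf (n : ℕ),
      KTree.coeff_pow_eq_tuple_sum ρ f h0 hf k ((n : ℕ) - 1), Finset.mul_sum]
    have hbij : Function.Bijective
        (fun c : {c : Fin k → KTree k // ∑ i, (c i).size = (n : ℕ) - 1} =>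
          (⟨KTree.node c.1, by
            show (∑ i, (c.1 i).size) + 1 = (n : ℕ)
            rw [c.2]; omega⟩ : {t : KTree k // t.size = (n : ℕ)})) := by
      constructor
      · intro a b hab
        have : KTree.node a.1 = KTree.node b.1 := congrArg Subtype.val hab
        exact Subtype.ext (KTree.node.inj this)
      · rintro ⟨(_ | c), ht⟩
        · exfalso; simp [KTree.size] at ht; omega
        · have hc : ∑ i, (c i).size = (n : ℕ) - 1 := by
            have : (∑ i, (c i).size) + 1 = (n : ℕ) := ht
            omega
          exact ⟨⟨c, hc⟩, Subtype.ext rfl⟩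
    refine (Fintype.sum_bijective _ hbij _ _ fun c => ?_).symm
    show ρ n * ∏ i, KTree.wt ρ (c.1 i) = KTree.wt ρ (KTree.node c.1)
    rw [KTree.wt_node]
    congr 2
    refine Subtype.ext ?_
    show (n : ℕ) = (∑ i, (c.1 i).size) + 1
    rw [c.2]; omega
  rw [eq_div_iff hne]
  exact key.symm
end

section
/- For every n ≥ 1 and every k ≥ 1, Σ_{T ∈ T_k(n)} ∏_{v ∈ T} 1/(h_v · k^{h_v - 1}) = 1/n!, where T_k(n) is the set of k-ary trees with n vertices. -/
open Finset

namespace KTree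
variable {k : ℕ}

noncomputable instance : DecidableEq (KTree k) := Classical.decEq _

noncomputable def upTo (k : ℕ) : ℕ → Finset (KTree k)
  | 0 => {leaf}
  | n+1 => insert leaf ((Fintype.piFinset fun _ : Fin k => upTo k n).image node)

lemma mem_upTo (t : KTree k) : ∀ n, t.size ≤ n → t ∈ upTo k n := by
  induction t with
  | leaf => intro n _; cases n <;> simp [upTo]
  | node c ih =>
    intro n hn
    obtain ⟨m, rfl⟩ : ∃ m, n = m + 1 := ⟨n - 1, by simp only [size] at hn; omega⟩
    have hm : ∀ i, (c i).size ≤ m := by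
      intro i
      have h2 : (c i).size ≤ ∑ j, (c j).size :=
        by apply Finset.single_le_sum (fun j _ => Nat.zero_le _) (Finset.mem_univ i)
      simp only [size] at hn
      omega
    simp only [upTo, Finset.mem_insert, Finset.mem_image]
    exact Or.inr ⟨c, Fintype.mem_piFinset.2 fun i => ih i m (hm i), rfl⟩

noncomputable def trees (k n : ℕ) : Finset (KTree k) :=
  (upTo k n).filter (fun t => t.size = n)

lemma mem_trees {t : KTree k} {n : ℕ} : t ∈ trees k n ↔ t.size = n :=
  ⟨fun h => (Finset.mem_filter.1 h).2,
   fun h => Finset.mem_filter.2 ⟨mem_upTo t n h.le, h⟩⟩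

/-- The weight of a tree. -/
noncomputable def w (t : KTree k) : ℚ :=
  (t.hooks.map fun h : ℕ+ => 1 / ((h : ℚ) * (k : ℚ) ^ ((h : ℕ) - 1))).prod

lemma prod_map_sum_multiset {ι M N : Type*} [CommMonoid N] (s : Finset ι)
    (m : ι → Multiset M) (f : M → N) :
    ((∑ i ∈ s, m i).map f).prod = ∏ i ∈ s, ((m i).map f).prod := by
  induction s using Finset.cons_induction with
  | empty => simp
  | cons a s ha ih => simp [Finset.sum_cons, Finset.prod_cons, ih]

@[simp] lemma w_leaf : w (leaf : KTree k) = 1 := by simp [w, hooks]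

lemma w_node (c : Fin k → KTree k) :
    w (node c) = (1 / ((((∑ i, (c i).size) + 1 : ℕ) : ℚ)
        * (k : ℚ) ^ (∑ i, (c i).size))) * ∏ i, w (c i) := by
  simp only [w, hooks, Multiset.map_cons, Multiset.prod_cons, prod_map_sum_multiset]
  erw [Multiset.map_cons, Multiset.prod_cons, prod_map_sum_multiset]
  norm_num

lemma node_inj : Function.Injective (node : (Fin k → KTree k) → KTree k) := by
  intro a b h; injection h

lemma trees_succ (n : ℕ) :
    trees k (n+1) = ((Fintype.piFinset fun _ : Fin k => upTo k n).filter
      (fun c => ∑ i, (c i).size = n)).image node := by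
  ext t
  rw [mem_trees]
  cases t with
  | leaf =>
    simp only [size, Finset.mem_image, Finset.mem_filter]
    constructor
    · omega
    · rintro ⟨c, -, h⟩; exact absurd h (by intro h; injection h)
  | node c =>
    simp only [size, Finset.mem_image]
    constructor
    · intro h
      have hsum : ∑ i, (c i).size = n := by omega
      refine ⟨c, Finset.mem_filter.2 ⟨Fintype.mem_piFinset.2 fun i => ?_, hsum⟩, rfl⟩
      apply mem_upTo
      have h2 : (c i).size ≤ ∑ j, (c j).size :=
        by apply Finset.single_le_sum (fun j _ => Nat.zero_le _) (Finset.mem_univ i)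
      omega
    · rintro ⟨c', hc', h⟩
      obtain rfl : c' = c := node_inj h
      have := (Finset.mem_filter.1 hc').2
      omega

lemma sum_piAntidiag_inv_factorial (k n : ℕ) :
    ∑ m ∈ piAntidiag (univ : Finset (Fin k)) n, ∏ i, (1 / ((m i).factorial : ℚ))
      = (k : ℚ) ^ n / (n.factorial : ℚ) := by
  have key := Finset.sum_pow_eq_sum_piAntidiag (univ : Finset (Fin k)) (fun _ => (1 : ℚ)) n
  simp only [one_pow, prod_const_one, mul_one, Finset.sum_const, Finset.card_univ,
    Fintype.card_fin, nsmul_eq_mul, mul_one] at key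
  rw [eq_div_iff (by positivity : (n.factorial : ℚ) ≠ 0), key, Finset.sum_mul]
  refine Finset.sum_congr rfl fun m hm => ?_
  rw [Finset.mem_piAntidiag] at hm
  have hspec := Nat.multinomial_spec (univ : Finset (Fin k)) m
  rw [hm.1] at hspec
  have hcast : (∏ i, ((m i).factorial : ℚ)) * (Nat.multinomial univ m : ℚ)
      = (n.factorial : ℚ) := by exact_mod_cast congrArg (Nat.cast : ℕ → ℚ) hspec
  have hfact : (∏ i, ((m i).factorial : ℚ)) ≠ 0 := by positivity
  have hprod : ∏ i, (1 / ((m i).factorial : ℚ)) = (∏ i, ((m i).factorial : ℚ))⁻¹ := by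
    rw [← Finset.prod_inv_distrib]; simp [one_div]
  rw [hprod]
  field_simp
  linarith [hcast]

lemma sum_w (hk : 1 ≤ k) : ∀ n, ∑ t ∈ trees k n, w t = 1 / (n.factorial : ℚ) := by
  intro n
  induction n using Nat.strong_induction_on with
  | _ n ih =>
    match n with
    | 0 =>
      have : trees k 0 = {leaf} := by
        ext t
        rw [mem_trees, Finset.mem_singleton]
        cases t <;> simp [size]
      simp [this]
    | n+1 =>
      rw [trees_succ, Finset.sum_image (fun a _ b _ h => node_inj h)]
      have step1 : ∑ c ∈ (Fintype.piFinset fun _ : Fin k => upTo k n).filter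
            (fun c => ∑ i, (c i).size = n), w (node c)
          = (1 / (((n : ℚ) + 1) * (k : ℚ) ^ n)) *
            ∑ c ∈ (Fintype.piFinset fun _ : Fin k => upTo k n).filter
              (fun c => ∑ i, (c i).size = n), ∏ i, w (c i) := by
        rw [Finset.mul_sum]
        refine Finset.sum_congr rfl fun c hc => ?_
        have hsum := (Finset.mem_filter.1 hc).2
        rw [w_node, hsum]
        push_cast
        ring
      rw [step1]
      have step2 : ∑ c ∈ (Fintype.piFinset fun _ : Fin k => upTo k n).filter
            (fun c => ∑ i, (c i).size = n), ∏ i, w (c i)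
          = ∑ m ∈ piAntidiag (univ : Finset (Fin k)) n, ∏ i, (1 / ((m i).factorial : ℚ)) := by
        have hmaps : ∀ c ∈ (Fintype.piFinset fun _ : Fin k => upTo k n).filter
              (fun c => ∑ i, (c i).size = n),
            (fun i => (c i).size) ∈ piAntidiag (univ : Finset (Fin k)) n :=
          fun c hc => Finset.mem_piAntidiag.2 ⟨(Finset.mem_filter.1 hc).2,
            fun i _ => Finset.mem_univ i⟩
        rw [← Finset.sum_fiberwise_of_maps_to hmaps (fun c => ∏ i, w (c i))]
        refine Finset.sum_congr rfl fun m hm => ?_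
        have hmsum : ∑ i, m i = n := (Finset.mem_piAntidiag.1 hm).1
        have hfib : ((Fintype.piFinset fun _ : Fin k => upTo k n).filter
              (fun c => ∑ i, (c i).size = n)).filter (fun c => (fun i => (c i).size) = m)
            = Fintype.piFinset fun i => trees k (m i) := by
          ext c
          simp only [Finset.mem_filter, Fintype.mem_piFinset, mem_trees, funext_iff]
          constructor
          · rintro ⟨-, heq⟩; exact fun i => heq i
          · intro h
            have hle : ∀ i, m i ≤ n := by
              intro i
              have h2 : m i ≤ ∑ j, m j :=
                by apply Finset.single_le_sum (fun j _ => Nat.zero_le _) (Finset.mem_univ i)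
              omega
            refine ⟨⟨fun i => mem_upTo _ _ (by rw [h i]; exact hle i), ?_⟩, h⟩
            simp only [h]; exact hmsum
        rw [hfib]
        have hIH : ∀ i, ∑ t ∈ trees k (m i), w t = 1 / ((m i).factorial : ℚ) := by
          intro i
          obtain h := ih (m i) (by
            have h2 : m i ≤ ∑ j, m j :=
              by apply Finset.single_le_sum (fun j _ => Nat.zero_le _) (Finset.mem_univ i)
            omega)
          exact h
        rw [← Finset.prod_univ_sum]
        exact Finset.prod_congr rfl fun i _ => hIH i
      rw [step2, sum_piAntidiag_inv_factorial]
      have hkn : (k : ℚ) ^ n ≠ 0 := by positivity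
      have hn1 : ((n : ℚ) + 1) ≠ 0 := by positivity
      rw [Nat.factorial_succ]
      push_cast
      field_simp

end KTree

/-- The hook length formula of Han and Yang for `k`-ary trees. -/
theorem hook_formula_kary (k n : ℕ) (hk : 1 ≤ k) (hn : 1 ≤ n) :
    ∑ᶠ T : {t : KTree k // t.size = n},
      ((T : KTree k).hooks.map fun (h : ℕ+) =>
        1 / ((h : ℚ) * (k : ℚ) ^ ((h : ℕ) - 1))).prod
    = 1 / (n.factorial : ℚ) := by
  have : ∑ᶠ T : {t : KTree k // t.size = n}, KTree.w (T : KTree k)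
      = 1 / (n.factorial : ℚ) := by
    rw [finsum_subtype_eq_finsum_cond]
    have hset : {t : KTree k | t.size = n} = ↑(KTree.trees k n) := by
      ext t; simp [KTree.mem_trees]
    calc ∑ᶠ (t : KTree k) (_ : t.size = n), KTree.w t
        = ∑ᶠ t ∈ {t : KTree k | t.size = n}, KTree.w t := rfl
      _ = ∑ᶠ t ∈ (↑(KTree.trees k n) : Set (KTree k)), KTree.w t := by rw [hset]
      _ = ∑ t ∈ KTree.trees k n, KTree.w t := finsum_mem_coe_finset _ _
      _ = 1 / (n.factorial : ℚ) := KTree.sum_w hk n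
  exact this
end

section
/- Suppose ρ : ℕ⁺ → K and f(x) ∈ K[[x]] with f(0) = 0 satisfy Σ_{n≥1} (Σ_{T ∈ T(n)} ∏_{v ∈ T} ρ(h_v)) x^n/n! = f(x), where T(n) is the set of labeled rooted trees on vertex set {1,...,n}. Then for all n ≥ 1 with [x^{n-1}]e^{f(x)} ≠ 0, ρ(n) = [x^n]f(x) / [x^{n-1}]e^{f(x)}. -/
set_option linter.unusedSectionVars false
set_option linter.unusedVariables false
set_option maxHeartbeats 1000000

/-- The parent relation associated to a parent map on `Fin n`. -/
def parentRel {n : ℕ} (p : Fin n → Option (Fin n)) : Fin n → Fin n → Prop :=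
  fun a b => p a = some b

/-- A parent map on `{1, …, n}` is a (labeled rooted) forest if it has no cycles. -/
def IsRForest {n : ℕ} (p : Fin n → Option (Fin n)) : Prop :=
  ∀ v, ¬ Relation.TransGen (parentRel p) v v

/-- A labeled rooted tree on `{1, …, n}`: an acyclic parent map with a unique root. -/
def IsRTree {n : ℕ} (p : Fin n → Option (Fin n)) : Prop :=
  IsRForest p ∧ ∃! r, p r = none

/-- The hook length of `v`: the number of descendants of `v`, counting `v` itself. -/
noncomputable def hookLen {n : ℕ} (p : Fin n → Option (Fin n)) (v : Fin n) : ℕ :=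
  Nat.card {u : Fin n // Relation.ReflTransGen (parentRel p) u v}

lemma hookLen_pos {n : ℕ} (p : Fin n → Option (Fin n)) (v : Fin n) : 0 < hookLen p v :=
  @Nat.card_pos _ ⟨⟨v, Relation.ReflTransGen.refl⟩⟩ _

/-- The hook length of `v` as a positive natural number. -/
noncomputable def hook {n : ℕ} (p : Fin n → Option (Fin n)) (v : Fin n) : ℕ+ :=
  ⟨hookLen p v, hookLen_pos p v⟩


open Relation

section Basic
variable {α : Type*} {β : Type*}

/-- parent relation for a general parent map -/
def PRel (p : α → Option α) : α → α → Prop := fun a b => p a = some b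

def PForest (p : α → Option α) : Prop := ∀ v, ¬ Relation.TransGen (PRel p) v v

def PTree (p : α → Option α) : Prop := PForest p ∧ ∃! r, p r = none

noncomputable def phk (p : α → Option α) (v : α) : ℕ :=
  Nat.card {u : α // Relation.ReflTransGen (PRel p) u v}

lemma prel_functional {p : α → Option α} {a b c : α} (h1 : PRel p a b) (h2 : PRel p a c) :
    b = c := by
  unfold PRel at h1 h2; rw [h1] at h2; exact Option.some_injective _ h2

lemma wf_swap_prel [Finite α] {p : α → Option α} (hp : PForest p) :
    WellFounded (Function.swap (PRel p)) := by
  have : IsTrans α (TransGen (Function.swap (PRel p))) := inferInstance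
  have hirr : IsIrrefl α (TransGen (Function.swap (PRel p))) := by
    constructor
    intro a ha
    exact hp a (Relation.transGen_swap.mp ha)
  have := Finite.wellFounded_of_trans_of_irrefl (TransGen (Function.swap (PRel p)))
  exact Subrelation.wf (fun h => TransGen.single h) this

/-- every vertex of a finite forest reaches a root -/
lemma exists_root [Finite α] {p : α → Option α} (hp : PForest p) (v : α) :
    ∃ r, Relation.ReflTransGen (PRel p) v r ∧ p r = none := by
  induction v using (wf_swap_prel hp).induction with
  | _ v ih =>
    cases hv : p v with
    | none => exact ⟨v, ReflTransGen.refl, hv⟩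
    | some w =>
      obtain ⟨r, hr1, hr2⟩ := ih w hv
      exact ⟨r, ReflTransGen.head hv hr1, hr2⟩

lemma no_step_from_root {p : α → Option α} {r : α} (hr : p r = none) {b : α}
    (h : Relation.ReflTransGen (PRel p) r b) : r = b := by
  rcases h.cases_head with h | ⟨c, hc, _⟩
  · exact h
  · simp [PRel, hr] at hc

/-- in a tree every vertex reaches the unique root -/
lemma tree_reaches_root [Finite α] {p : α → Option α} (hp : PTree p) {r : α}
    (hr : p r = none) (v : α) : Relation.ReflTransGen (PRel p) v r := by
  obtain ⟨r', h1, h2⟩ := exists_root hp.1 v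
  obtain ⟨r0, -, hu⟩ := hp.2
  rwa [(hu r' h2).trans (hu r hr).symm] at h1

/-- functional linearity: two reachable points are comparable -/
lemma rtg_linear {p : α → Option α} {a b c : α}
    (hab : Relation.ReflTransGen (PRel p) a b) (hac : Relation.ReflTransGen (PRel p) a c) :
    Relation.ReflTransGen (PRel p) b c ∨ Relation.ReflTransGen (PRel p) c b := by
  induction hab using Relation.ReflTransGen.head_induction_on with
  | refl => exact Or.inl hac
  | head hstep _ ih =>
    rcases hac.cases_head with rfl | ⟨d, hd, hdc⟩
    · rename_i a' _ h'
      exact Or.inr (ReflTransGen.head hstep h')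
    · rw [← prel_functional hstep hd] at hdc
      exact ih hdc
end Basic

section Transport
variable {α β : Type*}

def pmap (e : α ≃ β) (p : α → Option α) : β → Option β :=
  fun b => (p (e.symm b)).map e

lemma prel_pmap (e : α ≃ β) (p : α → Option α) {a b : β} :
    PRel (pmap e p) a b ↔ PRel p (e.symm a) (e.symm b) := by
  simp only [PRel, pmap, Option.map_eq_some_iff]
  constructor
  · rintro ⟨x, hx, rfl⟩; simpa using hx
  · intro h; exact ⟨e.symm b, h, by simp⟩

lemma prel_pmap' (e : α ≃ β) (p : α → Option α) {a b : α} :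
    PRel (pmap e p) (e a) (e b) ↔ PRel p a b := by
  rw [prel_pmap]; simp

lemma rtg_pmap (e : α ≃ β) (p : α → Option α) {a b : β} :
    Relation.ReflTransGen (PRel (pmap e p)) a b ↔
      Relation.ReflTransGen (PRel p) (e.symm a) (e.symm b) := by
  constructor
  · exact Relation.ReflTransGen.lift e.symm (fun x y h => (prel_pmap e p).mp h) _ _
  · intro h
    have := Relation.ReflTransGen.lift e (fun x y h => (prel_pmap' e p).mpr h) _ _ h
    simpa [Function.onFun] using this

lemma tg_pmap (e : α ≃ β) (p : α → Option α) {a b : β} :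
    Relation.TransGen (PRel (pmap e p)) a b ↔
      Relation.TransGen (PRel p) (e.symm a) (e.symm b) := by
  constructor
  · exact Relation.TransGen.lift e.symm (fun x y h => (prel_pmap e p).mp h) _ _
  · intro h
    have := Relation.TransGen.lift e (fun x y h => (prel_pmap' e p).mpr h) _ _ h
    simpa [Function.onFun] using this

lemma pforest_pmap (e : α ≃ β) {p : α → Option α} (hp : PForest p) : PForest (pmap e p) := by
  intro v hv
  exact hp _ ((tg_pmap e p).mp hv)

lemma pmap_none (e : α ≃ β) (p : α → Option α) {b : β} :
    pmap e p b = none ↔ p (e.symm b) = none := by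
  simp [pmap]

lemma ptree_pmap (e : α ≃ β) {p : α → Option α} (hp : PTree p) : PTree (pmap e p) := by
  refine ⟨pforest_pmap e hp.1, ?_⟩
  obtain ⟨r, hr, hu⟩ := hp.2
  refine ⟨e r, by simp [pmap_none, hr], fun y hy => ?_⟩
  simp only at hy
  rw [pmap_none] at hy
  have := hu _ hy
  rw [← this]; simp

lemma pmap_pmap (e : α ≃ β) (p : α → Option α) : pmap e.symm (pmap e p) = p := by
  funext a
  simp [pmap, Option.map_map]

lemma phk_pmap (e : α ≃ β) (p : α → Option α) (v : α) :
    phk (pmap e p) (e v) = phk p v := by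
  unfold phk
  apply Nat.card_congr
  refine ⟨fun u => ⟨e.symm u.1, by have := u.2; rwa [rtg_pmap e p, Equiv.symm_apply_apply] at this⟩,
    fun u => ⟨e u.1, by rw [rtg_pmap e p]; simpa using u.2⟩, fun u => by simp, fun u => by simp⟩

variable [Fintype α] [Fintype β]

noncomputable instance : Fintype {p : α → Option α // PTree p} := Fintype.ofFinite _
noncomputable instance : Fintype {p : α → Option α // PForest p} := Fintype.ofFinite _

/-- equivalence of tree-structures under a bijection of vertex sets -/
noncomputable def treeEquiv (e : α ≃ β) :
    {p : α → Option α // PTree p} ≃ {p : β → Option β // PTree p} where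
  toFun p := ⟨pmap e p.1, ptree_pmap e p.2⟩
  invFun q := ⟨pmap e.symm q.1, ptree_pmap e.symm q.2⟩
  left_inv p := by ext1; exact pmap_pmap e p.1
  right_inv q := by
    ext1
    have := pmap_pmap e.symm q.1
    simpa using this

noncomputable def forestEquiv (e : α ≃ β) :
    {p : α → Option α // PForest p} ≃ {p : β → Option β // PForest p} where
  toFun p := ⟨pmap e p.1, pforest_pmap e p.2⟩
  invFun q := ⟨pmap e.symm q.1, pforest_pmap e.symm q.2⟩
  left_inv p := by ext1; exact pmap_pmap e p.1
  right_inv q := by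
    ext1
    have := pmap_pmap e.symm q.1
    simpa using this

variable {K : Type*} [CommRing K]

lemma tree_sum_transport (e : α ≃ β) (w : ℕ → K) :
    ∑ p : {p : β → Option β // PTree p}, ∏ v : β, w (phk p.1 v) =
      ∑ p : {p : α → Option α // PTree p}, ∏ v : α, w (phk p.1 v) := by
  rw [← Equiv.sum_comp (treeEquiv e)]
  refine Finset.sum_congr rfl fun p _ => ?_
  rw [← Equiv.prod_comp e]
  exact Finset.prod_congr rfl fun v _ => by
    show w (phk (pmap e p.1) (e v)) = _
    rw [phk_pmap]

lemma forest_sum_transport (e : α ≃ β) (w : ℕ → K) :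
    ∑ p : {p : β → Option β // PForest p}, ∏ v : β, w (phk p.1 v) =
      ∑ p : {p : α → Option α // PForest p}, ∏ v : α, w (phk p.1 v) := by
  rw [← Equiv.sum_comp (forestEquiv e)]
  refine Finset.sum_congr rfl fun p _ => ?_
  rw [← Equiv.prod_comp e]
  exact Finset.prod_congr rfl fun v _ => by
    show w (phk (pmap e p.1) (e v)) = _
    rw [phk_pmap]

end Transport

section LemmaA
variable {α : Type*} [Fintype α] [DecidableEq α]

/-- restriction of a tree with root `r` to the non-root vertices -/
def restrictT (p : α → Option α) (r : α) : {v : α // v ≠ r} → Option {v : α // v ≠ r} :=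
  fun v => (p v.1).bind (fun w => if h : w = r then none else some ⟨w, h⟩)

/-- extension of a forest on the non-root vertices to a tree with root `r` -/
def extendT (r : α) (q : {v : α // v ≠ r} → Option {v : α // v ≠ r}) : α → Option α :=
  fun v => if h : v = r then none else some (((q ⟨v, h⟩).map Subtype.val).getD r)

lemma prel_restrictT {p : α → Option α} {r : α} {u v : {v : α // v ≠ r}}
    (h : PRel (restrictT p r) u v) : PRel p u.1 v.1 := by
  simp only [PRel, restrictT, Option.bind_eq_some_iff] at h ⊢
  obtain ⟨w, hw, h2⟩ := h
  split at h2
  · exact absurd h2 (by simp)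
  · obtain rfl : w = v.1 := by cases h2; rfl
    exact hw

lemma extendT_root (r : α) (q : {v : α // v ≠ r} → Option {v : α // v ≠ r}) :
    extendT r q r = none := by simp [extendT]

lemma extendT_ne {r : α} {q : {v : α // v ≠ r} → Option {v : α // v ≠ r}} {v : α} (h : v ≠ r) :
    extendT r q v = some (((q ⟨v, h⟩).map Subtype.val).getD r) := by
  simp [extendT, h]

lemma tg_head_step {R : α → α → Prop} {r x : α} (h : Relation.TransGen R r x) :
    ∃ w, R r w := by
  induction h with
  | single h => exact ⟨_, h⟩
  | tail _ _ ih => exact ih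

/-- a step of `extendT` landing away from the root comes from a step of `q` -/
lemma prel_extendT {r : α} {q : {v : α // v ≠ r} → Option {v : α // v ≠ r}} {a b : α}
    (h : PRel (extendT r q) a b) (hb : b ≠ r) :
    ∃ ha : a ≠ r, PRel q ⟨a, ha⟩ ⟨b, hb⟩ := by
  have ha : a ≠ r := by
    intro hh; subst hh
    rw [PRel, extendT_root] at h; exact absurd h (by simp)
  refine ⟨ha, ?_⟩
  rw [PRel, extendT_ne ha] at h
  cases hq : q ⟨a, ha⟩ with
  | none => rw [hq] at h; simp at h; exact absurd h.symm hb
  | some w =>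
    rw [hq] at h; simp at h
    rw [PRel, hq]
    congr 1
    exact Subtype.ext h

lemma prel_extendT' {r : α} {q : {v : α // v ≠ r} → Option {v : α // v ≠ r}}
    {u v : {v : α // v ≠ r}} (h : PRel q u v) : PRel (extendT r q) u.1 v.1 := by
  rw [PRel, extendT_ne u.2]
  have : q ⟨u.1, u.2⟩ = some v := by rw [Subtype.coe_eta]; exact h
  rw [this]; simp

lemma pforest_restrictT {p : α → Option α} (hp : PForest p) (r : α) :
    PForest (restrictT p r) := by
  intro v hv
  exact hp v.1 (Relation.TransGen.lift Subtype.val (fun _ _ h => prel_restrictT h) _ _ hv)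

lemma tg_extendT {r : α} {q : {v : α // v ≠ r} → Option {v : α // v ≠ r}} {a b : α}
    (h : Relation.TransGen (PRel (extendT r q)) a b) (hb : b ≠ r) :
    ∃ (ha : a ≠ r), Relation.TransGen (PRel q) ⟨a, ha⟩ ⟨b, hb⟩ := by
  induction h with
  | single h =>
    obtain ⟨ha, hs⟩ := prel_extendT h hb
    exact ⟨ha, Relation.TransGen.single hs⟩
  | @tail b c htg hstep ih =>
    obtain ⟨hbne, hs⟩ := prel_extendT hstep hb
    obtain ⟨ha, htg'⟩ := ih hbne
    exact ⟨ha, htg'.tail hs⟩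

lemma ptree_extendT {r : α} {q : {v : α // v ≠ r} → Option {v : α // v ≠ r}}
    (hq : PForest q) : PTree (extendT r q) := by
  constructor
  · intro v hv
    by_cases hvr : v = r
    · subst hvr
      obtain ⟨w, hw⟩ := tg_head_step hv
      rw [PRel, extendT_root] at hw; exact absurd hw (by simp)
    · obtain ⟨ha, htg⟩ := tg_extendT hv hvr
      exact hq _ htg
  · refine ⟨r, extendT_root r q, fun y hy => ?_⟩
    by_contra hne
    simp only at hy
    rw [extendT_ne hne] at hy
    exact absurd hy (by simp)

lemma rtg_extendT {r : α} {q : {v : α // v ≠ r} → Option {v : α // v ≠ r}} {a b : α}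
    (h : Relation.ReflTransGen (PRel (extendT r q)) a b) (hb : b ≠ r) :
    ∃ (ha : a ≠ r), Relation.ReflTransGen (PRel q) ⟨a, ha⟩ ⟨b, hb⟩ := by
  induction h using Relation.ReflTransGen.head_induction_on with
  | refl => exact ⟨hb, Relation.ReflTransGen.refl⟩
  | @head a' c hstep hrest ih =>
    have hc : c ≠ r := by
      intro hh
      exact hb (no_step_from_root (extendT_root r q) (hh ▸ hrest)).symm
    obtain ⟨hc', htg⟩ := ih
    obtain ⟨ha, hs⟩ := prel_extendT hstep hc
    exact ⟨ha, Relation.ReflTransGen.head hs (by convert htg)⟩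

lemma rtg_extendT' {r : α} {q : {v : α // v ≠ r} → Option {v : α // v ≠ r}}
    {u v : {v : α // v ≠ r}} (h : Relation.ReflTransGen (PRel q) u v) :
    Relation.ReflTransGen (PRel (extendT r q)) u.1 v.1 :=
  Relation.ReflTransGen.lift Subtype.val (fun _ _ h => prel_extendT' h) _ _ h

lemma phk_extendT_root {r : α} (q : {v : α // v ≠ r} → Option {v : α // v ≠ r})
    (hq : PForest q) : phk (extendT r q) r = Fintype.card α := by
  have htree := ptree_extendT (r := r) hq
  unfold phk
  rw [Nat.card_congr (Equiv.subtypeUnivEquiv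
    (fun v => tree_reaches_root htree (extendT_root r q) v)), Nat.card_eq_fintype_card]

lemma phk_extendT_ne {r : α} (q : {v : α // v ≠ r} → Option {v : α // v ≠ r})
    (v : {v : α // v ≠ r}) : phk (extendT r q) v.1 = phk q v := by
  unfold phk
  apply Nat.card_congr
  refine ⟨fun u => ⟨⟨u.1, (rtg_extendT u.2 v.2).choose⟩, ?_⟩,
    fun u => ⟨u.1.1, rtg_extendT' u.2⟩, fun u => rfl, fun u => by ext; rfl⟩
  have := (rtg_extendT u.2 v.2).choose_spec
  convert this

lemma restrictT_extendT (r : α) (q : {v : α // v ≠ r} → Option {v : α // v ≠ r}) :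
    restrictT (extendT r q) r = q := by
  funext v
  rw [restrictT, extendT_ne v.2, Option.bind_some]
  cases hq : q ⟨v.1, v.2⟩ with
  | none => rw [Subtype.coe_eta] at hq; simp [hq]
  | some u =>
    rw [Subtype.coe_eta] at hq
    simp [hq, u.2]

lemma extendT_restrictT {p : α → Option α} (hp : PTree p) {r : α} (hr : p r = none) :
    extendT r (restrictT p r) = p := by
  funext v
  by_cases hv : v = r
  · subst hv; rw [extendT_root, hr]
  · rw [extendT_ne hv, restrictT]
    cases hpv : p v with
    | none =>
      obtain ⟨r0, -, hu⟩ := hp.2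
      exact absurd ((hu v hpv).trans (hu r hr).symm) hv
    | some u =>
      by_cases hur : u = r
      · subst hur; simp
      · simp [hur]

variable {K : Type*} [CommRing K]

noncomputable def rootedE (r : α) :
    {q : {v : α // v ≠ r} → Option {v : α // v ≠ r} // PForest q} ≃
      {p : {p : α → Option α // PTree p} // p.1 r = none} where
  toFun q := ⟨⟨extendT r q.1, ptree_extendT q.2⟩, extendT_root r q.1⟩
  invFun p := ⟨restrictT p.1.1 r, pforest_restrictT p.1.2.1 r⟩
  left_inv q := by ext1; exact restrictT_extendT r q.1
  right_inv p := by ext1; ext1; exact extendT_restrictT p.1.2 p.2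

/-- the product of weights of a tree splits off the root factor -/
lemma prod_weight_extendT (w : ℕ → K) (r : α)
    (q : {q : {v : α // v ≠ r} → Option {v : α // v ≠ r} // PForest q}) :
    ∏ v : α, w (phk (extendT r q.1) v) =
      w (Fintype.card α) * ∏ v : {v : α // v ≠ r}, w (phk q.1 v) := by
  rw [Fintype.prod_eq_mul_prod_compl r, phk_extendT_root q.1 q.2]
  congr 1
  rw [Finset.prod_subtype (p := fun v => v ≠ r) ({r}ᶜ) (by simp) (fun v => w (phk (extendT r q.1) v))]
  exact Finset.prod_congr rfl fun v _ => by rw [← phk_extendT_ne q.1 v]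

lemma tree_sum_eq_sum_roots (w : ℕ → K) :
    ∑ p : {p : α → Option α // PTree p}, ∏ v : α, w (phk p.1 v) =
      ∑ r : α, w (Fintype.card α) *
        ∑ q : {q : {v : α // v ≠ r} → Option {v : α // v ≠ r} // PForest q},
          ∏ v : {v : α // v ≠ r}, w (phk q.1 v) := by
  classical
  have step1 : ∀ p : {p : α → Option α // PTree p},
      (∏ v : α, w (phk p.1 v)) = ∑ r : α, if p.1 r = none then ∏ v : α, w (phk p.1 v) else 0 := by
    intro p
    obtain ⟨r0, hr0, hu⟩ := p.2.2
    rw [Finset.sum_eq_single r0 (fun b _ hb => if_neg (fun h => hb (hu b h)))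
      (fun h => absurd (Finset.mem_univ r0) h), if_pos hr0]
  calc ∑ p : {p : α → Option α // PTree p}, ∏ v : α, w (phk p.1 v)
      = ∑ p : {p : α → Option α // PTree p}, ∑ r : α,
          if p.1 r = none then ∏ v : α, w (phk p.1 v) else 0 :=
        Finset.sum_congr rfl fun p _ => step1 p
    _ = ∑ r : α, ∑ p : {p : α → Option α // PTree p},
          if p.1 r = none then ∏ v : α, w (phk p.1 v) else 0 := Finset.sum_comm
    _ = _ := by
      refine Finset.sum_congr rfl fun r _ => ?_
      rw [← Finset.sum_filter, Finset.mul_sum]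
      rw [Finset.sum_subtype (p := fun p : {p : α → Option α // PTree p} => p.1 r = none) _
        (fun x => by simp) (fun p : {p : α → Option α // PTree p} => ∏ v : α, w (phk p.1 v))]
      rw [← Equiv.sum_comp (rootedE r)
        (fun a : {p : {p : α → Option α // PTree p} // p.1 r = none} => ∏ v : α, w (phk a.1.1 v))]
      exact Finset.sum_congr rfl fun q _ => prod_weight_extendT w r q

end LemmaA

section Sums
variable {K : Type*} [CommRing K]

noncomputable def Tsum (w : ℕ → K) (n : ℕ) : K :=
  ∑ p : {p : Fin n → Option (Fin n) // PTree p}, ∏ v : Fin n, w (phk p.1 v)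

noncomputable def Fsum (w : ℕ → K) (n : ℕ) : K :=
  ∑ p : {p : Fin n → Option (Fin n) // PForest p}, ∏ v : Fin n, w (phk p.1 v)

lemma tree_sum_card (α : Type*) [Fintype α] [DecidableEq α] (w : ℕ → K) :
    ∑ p : {p : α → Option α // PTree p}, ∏ v : α, w (phk p.1 v) =
      Tsum w (Fintype.card α) :=
  tree_sum_transport (Fintype.equivFin α).symm w

lemma forest_sum_card (α : Type*) [Fintype α] [DecidableEq α] (w : ℕ → K) :
    ∑ p : {p : α → Option α // PForest p}, ∏ v : α, w (phk p.1 v) =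
      Fsum w (Fintype.card α) :=
  forest_sum_transport (Fintype.equivFin α).symm w

lemma card_subtype_ne {n : ℕ} (r : Fin n) : Fintype.card {v : Fin n // v ≠ r} = n - 1 := by
  have : Fintype.card {v : Fin n // ¬ (v = r)} = n - 1 := by
    rw [Fintype.card_subtype_compl, Fintype.card_subtype_eq, Fintype.card_fin]
  exact this

lemma lemmaA (w : ℕ → K) (n : ℕ) : Tsum w n = (n : K) * w n * Fsum w (n - 1) := by
  rw [Tsum, tree_sum_eq_sum_roots w]
  have : ∀ r : Fin n,
      (∑ q : {q : {v : Fin n // v ≠ r} → Option {v : Fin n // v ≠ r} // PForest q},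
        ∏ v : {v : Fin n // v ≠ r}, w (phk q.1 v)) = Fsum w (n - 1) := fun r => by
    rw [forest_sum_card, card_subtype_ne]
  simp_rw [this, Fintype.card_fin, Finset.sum_const, Finset.card_univ, Fintype.card_fin,
    nsmul_eq_mul]
  ring

end Sums

section LemmaB
variable {α : Type*} [Fintype α] [DecidableEq α]

/-- `u` and `v` lie in the same tree of the forest `p` -/
def sameTree (p : α → Option α) (u v : α) : Prop :=
  ∃ r, p r = none ∧ Relation.ReflTransGen (PRel p) u r ∧ Relation.ReflTransGen (PRel p) v r

lemma root_unique_from {p : α → Option α} {a r1 r2 : α}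
    (h1 : Relation.ReflTransGen (PRel p) a r1) (hr1 : p r1 = none)
    (h2 : Relation.ReflTransGen (PRel p) a r2) (hr2 : p r2 = none) : r1 = r2 := by
  rcases rtg_linear h1 h2 with h | h
  · exact no_step_from_root hr1 h
  · exact (no_step_from_root hr2 h).symm

lemma sameTree_self [Finite α] {p : α → Option α} (hp : PForest p) (a : α) :
    sameTree p a a := by
  obtain ⟨r, h1, h2⟩ := exists_root hp a
  exact ⟨r, h2, h1, h1⟩

lemma sameTree_step {p : α → Option α} {a u w : α} (h : sameTree p a u)
    (hw : p u = some w) : sameTree p a w := by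
  obtain ⟨r, hroot, hra, hur⟩ := h
  rcases hur.cases_head with rfl | ⟨c, hc, hcr⟩
  · rw [hroot] at hw; exact absurd hw (by simp)
  · obtain rfl : c = w := Option.some_injective _ (hc ▸ hw ▸ rfl)
    exact ⟨r, hroot, hra, hcr⟩

lemma sameTree_step' {p : α → Option α} {a u w : α} (h : ¬ sameTree p a u)
    (hw : p u = some w) : ¬ sameTree p a w := by
  rintro ⟨r, hroot, hra, hwr⟩
  exact h ⟨r, hroot, hra, Relation.ReflTransGen.head hw hwr⟩

lemma sameTree_desc {p : α → Option α} {a u v : α}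
    (h : Relation.ReflTransGen (PRel p) u v) (hv : sameTree p a v) : sameTree p a u := by
  obtain ⟨r, hroot, hra, hvr⟩ := hv
  exact ⟨r, hroot, hra, h.trans hvr⟩

lemma sameTree_desc' {p : α → Option α} {a u v : α}
    (h : Relation.ReflTransGen (PRel p) u v) (hu : sameTree p a u) : sameTree p a v := by
  obtain ⟨r, hroot, hra, hur⟩ := hu
  rcases rtg_linear hur h with h' | h'
  · obtain rfl := no_step_from_root hroot h'
    exact ⟨r, hroot, hra, Relation.ReflTransGen.refl⟩
  · exact ⟨r, hroot, hra, h'⟩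

variable (S : Finset α)

/-- restriction of a forest to the vertex set `S` -/
def restrS (p : α → Option α) : {v : α // v ∈ S} → Option {v : α // v ∈ S} :=
  fun u => (p u.1).bind (fun w => if h : w ∈ S then some ⟨w, h⟩ else none)

/-- restriction of a forest to the complement of `S` -/
def restrC (p : α → Option α) : {v : α // v ∉ S} → Option {v : α // v ∉ S} :=
  fun u => (p u.1).bind (fun w => if h : w ∉ S then some ⟨w, h⟩ else none)

/-- combination of a parent map on `S` and one on its complement -/
def combine (q : {v : α // v ∈ S} → Option {v : α // v ∈ S})
    (q' : {v : α // v ∉ S} → Option {v : α // v ∉ S}) : α → Option α :=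
  fun v => if h : v ∈ S then (q ⟨v, h⟩).map Subtype.val else (q' ⟨v, h⟩).map Subtype.val

variable {S}

lemma prel_combine_mem {q : {v : α // v ∈ S} → Option {v : α // v ∈ S}}
    {q' : {v : α // v ∉ S} → Option {v : α // v ∉ S}} {u v : α}
    (h : PRel (combine S q q') u v) (hv : v ∈ S) :
    ∃ hu : u ∈ S, PRel q ⟨u, hu⟩ ⟨v, hv⟩ := by
  by_cases hu : u ∈ S
  · refine ⟨hu, ?_⟩
    rw [PRel, combine, dif_pos hu, Option.map_eq_some_iff] at h
    obtain ⟨x, hx, rfl⟩ := h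
    rw [PRel, hx]
  · exfalso
    rw [PRel, combine, dif_neg hu, Option.map_eq_some_iff] at h
    obtain ⟨x, hx, rfl⟩ := h
    exact x.2 hv

lemma prel_combine_not_mem {q : {v : α // v ∈ S} → Option {v : α // v ∈ S}}
    {q' : {v : α // v ∉ S} → Option {v : α // v ∉ S}} {u v : α}
    (h : PRel (combine S q q') u v) (hv : v ∉ S) :
    ∃ hu : u ∉ S, PRel q' ⟨u, hu⟩ ⟨v, hv⟩ := by
  by_cases hu : u ∈ S
  · exfalso
    rw [PRel, combine, dif_pos hu, Option.map_eq_some_iff] at h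
    obtain ⟨x, hx, rfl⟩ := h
    exact hv x.2
  · refine ⟨hu, ?_⟩
    rw [PRel, combine, dif_neg hu, Option.map_eq_some_iff] at h
    obtain ⟨x, hx, rfl⟩ := h
    rw [PRel, hx]

lemma prel_combine_mem' {q : {v : α // v ∈ S} → Option {v : α // v ∈ S}}
    {q' : {v : α // v ∉ S} → Option {v : α // v ∉ S}} {u v : {v : α // v ∈ S}}
    (h : PRel q u v) : PRel (combine S q q') u.1 v.1 := by
  rw [PRel, combine, dif_pos u.2, Subtype.coe_eta, h]; rfl

lemma prel_combine_not_mem' {q : {v : α // v ∈ S} → Option {v : α // v ∈ S}}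
    {q' : {v : α // v ∉ S} → Option {v : α // v ∉ S}} {u v : {v : α // v ∉ S}}
    (h : PRel q' u v) : PRel (combine S q q') u.1 v.1 := by
  rw [PRel, combine, dif_neg u.2, Subtype.coe_eta, h]; rfl

lemma rtg_combine_mem {q : {v : α // v ∈ S} → Option {v : α // v ∈ S}}
    {q' : {v : α // v ∉ S} → Option {v : α // v ∉ S}} {u v : α}
    (h : Relation.ReflTransGen (PRel (combine S q q')) u v) (hv : v ∈ S) :
    ∃ hu : u ∈ S, Relation.ReflTransGen (PRel q) ⟨u, hu⟩ ⟨v, hv⟩ := by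
  induction h using Relation.ReflTransGen.head_induction_on with
  | refl => exact ⟨hv, Relation.ReflTransGen.refl⟩
  | @head x c hstep hrest ih =>
    obtain ⟨hc, htg⟩ := ih
    obtain ⟨hx, hs⟩ := prel_combine_mem hstep hc
    exact ⟨hx, Relation.ReflTransGen.head hs htg⟩

lemma rtg_combine_not_mem {q : {v : α // v ∈ S} → Option {v : α // v ∈ S}}
    {q' : {v : α // v ∉ S} → Option {v : α // v ∉ S}} {u v : α}
    (h : Relation.ReflTransGen (PRel (combine S q q')) u v) (hv : v ∉ S) :
    ∃ hu : u ∉ S, Relation.ReflTransGen (PRel q') ⟨u, hu⟩ ⟨v, hv⟩ := by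
  induction h using Relation.ReflTransGen.head_induction_on with
  | refl => exact ⟨hv, Relation.ReflTransGen.refl⟩
  | @head x c hstep hrest ih =>
    obtain ⟨hc, htg⟩ := ih
    obtain ⟨hx, hs⟩ := prel_combine_not_mem hstep hc
    exact ⟨hx, Relation.ReflTransGen.head hs htg⟩

lemma pforest_combine {q : {v : α // v ∈ S} → Option {v : α // v ∈ S}}
    {q' : {v : α // v ∉ S} → Option {v : α // v ∉ S}}
    (hq : PForest q) (hq' : PForest q') : PForest (combine S q q') := by
  intro v hv
  by_cases h : v ∈ S
  · have : ∀ {x y : α}, Relation.TransGen (PRel (combine S q q')) x y → (hy : y ∈ S) →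
        ∃ hx : x ∈ S, Relation.TransGen (PRel q) ⟨x, hx⟩ ⟨y, hy⟩ := by
      intro x y hxy hy
      induction hxy with
      | single hs => obtain ⟨hx, h'⟩ := prel_combine_mem hs hy; exact ⟨hx, .single h'⟩
      | @tail b c htg hstep ih =>
        obtain ⟨hb, hs⟩ := prel_combine_mem hstep hy
        obtain ⟨hx, htg'⟩ := ih hb
        exact ⟨hx, htg'.tail hs⟩
    obtain ⟨hx, htg⟩ := this hv h
    exact hq _ htg
  · have : ∀ {x y : α}, Relation.TransGen (PRel (combine S q q')) x y → (hy : y ∉ S) →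
        ∃ hx : x ∉ S, Relation.TransGen (PRel q') ⟨x, hx⟩ ⟨y, hy⟩ := by
      intro x y hxy hy
      induction hxy with
      | single hs => obtain ⟨hx, h'⟩ := prel_combine_not_mem hs hy; exact ⟨hx, .single h'⟩
      | @tail b c htg hstep ih =>
        obtain ⟨hb, hs⟩ := prel_combine_not_mem hstep hy
        obtain ⟨hx, htg'⟩ := ih hb
        exact ⟨hx, htg'.tail hs⟩
    obtain ⟨hx, htg⟩ := this hv h
    exact hq' _ htg

/-- the component predicate satisfied by the combination -/
lemma sameTree_combine {a : α} (ha : a ∈ S)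
    {q : {v : α // v ∈ S} → Option {v : α // v ∈ S}}
    {q' : {v : α // v ∉ S} → Option {v : α // v ∉ S}}
    (hq : PTree q) (hq' : PForest q') (u : α) :
    sameTree (combine S q q') a u ↔ u ∈ S := by
  constructor
  · rintro ⟨r, hroot, hra, hur⟩
    have hrS : r ∈ S := by
      by_contra hrS
      obtain ⟨haS, -⟩ := rtg_combine_not_mem hra hrS
      exact haS ha
    obtain ⟨hu, -⟩ := rtg_combine_mem hur hrS
    exact hu
  · intro hu
    obtain ⟨rq, hrq, -⟩ := hq.2
    refine ⟨rq.1, ?_, ?_, ?_⟩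
    · rw [combine, dif_pos rq.2, Subtype.coe_eta, hrq]; rfl
    · exact Relation.ReflTransGen.lift Subtype.val (fun _ _ h => prel_combine_mem' h)
        _ _ (tree_reaches_root hq hrq ⟨a, ha⟩)
    · exact Relation.ReflTransGen.lift Subtype.val (fun _ _ h => prel_combine_mem' h)
        _ _ (tree_reaches_root hq hrq ⟨u, hu⟩)

/-- hook lengths in the `S`-part of a combination -/
lemma phk_combine_mem {q : {v : α // v ∈ S} → Option {v : α // v ∈ S}}
    {q' : {v : α // v ∉ S} → Option {v : α // v ∉ S}} (v : {v : α // v ∈ S}) :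
    phk (combine S q q') v.1 = phk q v := by
  unfold phk
  apply Nat.card_congr
  have key : ∀ u : {u : α // Relation.ReflTransGen (PRel (combine S q q')) u v.1},
      ∃ hu : u.1 ∈ S, Relation.ReflTransGen (PRel q) ⟨u.1, hu⟩ v := by
    intro u
    obtain ⟨hu, h⟩ := rtg_combine_mem u.2 v.2
    exact ⟨hu, by simpa using h⟩
  refine ⟨fun u => ⟨⟨u.1, (key u).choose⟩, (key u).choose_spec⟩,
    fun u => ⟨u.1.1, Relation.ReflTransGen.lift Subtype.val
      (fun _ _ h => prel_combine_mem' h) _ _ u.2⟩, fun u => rfl, fun u => by ext; rfl⟩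

lemma phk_combine_not_mem {q : {v : α // v ∈ S} → Option {v : α // v ∈ S}}
    {q' : {v : α // v ∉ S} → Option {v : α // v ∉ S}} (v : {v : α // v ∉ S}) :
    phk (combine S q q') v.1 = phk q' v := by
  unfold phk
  apply Nat.card_congr
  have key : ∀ u : {u : α // Relation.ReflTransGen (PRel (combine S q q')) u v.1},
      ∃ hu : u.1 ∉ S, Relation.ReflTransGen (PRel q') ⟨u.1, hu⟩ v := by
    intro u
    obtain ⟨hu, h⟩ := rtg_combine_not_mem u.2 v.2
    exact ⟨hu, by simpa using h⟩
  refine ⟨fun u => ⟨⟨u.1, (key u).choose⟩, (key u).choose_spec⟩,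
    fun u => ⟨u.1.1, Relation.ReflTransGen.lift Subtype.val
      (fun _ _ h => prel_combine_not_mem' h) _ _ u.2⟩, fun u => rfl, fun u => by ext; rfl⟩

lemma prel_restrS {p : α → Option α} {u v : {v : α // v ∈ S}}
    (h : PRel (restrS S p) u v) : PRel p u.1 v.1 := by
  simp only [PRel, restrS, Option.bind_eq_some_iff] at h ⊢
  obtain ⟨w, hw, h2⟩ := h
  split at h2
  · obtain rfl : w = v.1 := by cases h2; rfl
    exact hw
  · exact absurd h2 (by simp)

lemma prel_restrC {p : α → Option α} {u v : {v : α // v ∉ S}}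
    (h : PRel (restrC S p) u v) : PRel p u.1 v.1 := by
  simp only [PRel, restrC, Option.bind_eq_some_iff] at h ⊢
  obtain ⟨w, hw, h2⟩ := h
  split at h2
  · obtain rfl : w = v.1 := by cases h2; rfl
    exact hw
  · exact absurd h2 (by simp)

lemma pforest_restrS {p : α → Option α} (hp : PForest p) : PForest (restrS S p) :=
  fun v hv => hp v.1 (Relation.TransGen.lift Subtype.val (fun _ _ h => prel_restrS h) _ _ hv)

lemma pforest_restrC {p : α → Option α} (hp : PForest p) : PForest (restrC S p) :=
  fun v hv => hp v.1 (Relation.TransGen.lift Subtype.val (fun _ _ h => prel_restrC h) _ _ hv)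

lemma ptree_restrS {p : α → Option α} (hp : PForest p) {a : α}
    (hC : ∀ u, u ∈ S ↔ sameTree p a u) : PTree (restrS S p) := by
  refine ⟨pforest_restrS hp, ?_⟩
  obtain ⟨r, hra, hroot⟩ := exists_root hp a
  have hrS : r ∈ S := (hC r).mpr ⟨r, hroot, hra, Relation.ReflTransGen.refl⟩
  refine ⟨⟨r, hrS⟩, by simp [restrS, hroot], ?_⟩
  rintro ⟨u, huS⟩ hu
  simp only [restrS] at hu
  ext
  cases hpu : p u with
  | none =>
    obtain ⟨r', hroot', hra', hur'⟩ := (hC u).mp huS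
    obtain rfl := no_step_from_root hpu hur'
    exact root_unique_from hra' hpu hra hroot
  | some x =>
    exfalso
    rw [hpu] at hu
    have hxS : x ∈ S := (hC x).mpr (sameTree_step ((hC u).mp huS) hpu)
    simp [hxS] at hu

lemma combine_restr {p : α → Option α} {a : α}
    (hC : ∀ u, u ∈ S ↔ sameTree p a u) :
    combine S (restrS S p) (restrC S p) = p := by
  funext v
  by_cases hv : v ∈ S
  · rw [combine, dif_pos hv, restrS]
    cases hpv : p v with
    | none => rfl
    | some x =>
      have hxS : x ∈ S := (hC x).mpr (sameTree_step ((hC v).mp hv) hpv)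
      simp [hxS]
  · rw [combine, dif_neg hv, restrC]
    cases hpv : p v with
    | none => rfl
    | some x =>
      have hxS : x ∉ S := fun hxS =>
        hv ((hC v).mpr (sameTree_step' (fun hsv => hv ((hC v).mpr hsv)) hpv ((hC x).mp hxS) |>.elim))
      simp [hxS]

lemma restrS_combine (q : {v : α // v ∈ S} → Option {v : α // v ∈ S})
    (q' : {v : α // v ∉ S} → Option {v : α // v ∉ S}) :
    restrS S (combine S q q') = q := by
  funext v
  rw [restrS, combine, dif_pos v.2, Subtype.coe_eta]
  cases hq : q v with
  | none => simp
  | some u => simp [u.2]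

lemma restrC_combine (q : {v : α // v ∈ S} → Option {v : α // v ∈ S})
    (q' : {v : α // v ∉ S} → Option {v : α // v ∉ S}) :
    restrC S (combine S q q') = q' := by
  funext v
  rw [restrC, combine, dif_neg v.2, Subtype.coe_eta]
  cases hq : q' v with
  | none => simp
  | some u => simp [u.2]

noncomputable instance (S : Finset α) :
    Fintype {q : {v : α // v ∈ S} → Option {v : α // v ∈ S} // PTree q} := Fintype.ofFinite _
noncomputable instance (S : Finset α) :
    Fintype {q : {v : α // v ∉ S} → Option {v : α // v ∉ S} // PForest q} := Fintype.ofFinite _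

/-- decomposition of a forest into the tree containing `a` and the rest -/
noncomputable def compE (a : α) (ha : a ∈ S) :
    ({q : {v : α // v ∈ S} → Option {v : α // v ∈ S} // PTree q} ×
      {q' : {v : α // v ∉ S} → Option {v : α // v ∉ S} // PForest q'}) ≃
    {p : {p : α → Option α // PForest p} // ∀ u, u ∈ S ↔ sameTree p.1 a u} where
  toFun x := ⟨⟨combine S x.1.1 x.2.1, pforest_combine x.1.2.1 x.2.2⟩,
    fun u => (sameTree_combine ha x.1.2 x.2.2 u).symm⟩
  invFun p := (⟨restrS S p.1.1, ptree_restrS p.1.2 p.2⟩, ⟨restrC S p.1.1, pforest_restrC p.1.2⟩)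
  left_inv x := by
    ext1
    · ext1; exact restrS_combine x.1.1 x.2.1
    · ext1; exact restrC_combine x.1.1 x.2.1
  right_inv p := by ext1; ext1; exact combine_restr p.2

variable {K : Type*} [CommRing K]

lemma prod_weight_combine (w : ℕ → K)
    (q : {v : α // v ∈ S} → Option {v : α // v ∈ S})
    (q' : {v : α // v ∉ S} → Option {v : α // v ∉ S}) :
    ∏ v : α, w (phk (combine S q q') v) =
      (∏ v : {v : α // v ∈ S}, w (phk q v)) * ∏ v : {v : α // v ∉ S}, w (phk q' v) := by
  rw [← Finset.prod_mul_prod_compl S (fun v => w (phk (combine S q q') v))]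
  congr 1
  · rw [Finset.prod_subtype (p := fun v => v ∈ S) S (by simp)
      (fun v => w (phk (combine S q q') v))]
    exact Finset.prod_congr rfl fun v _ => by rw [phk_combine_mem]
  · rw [Finset.prod_subtype (p := fun v => v ∉ S) Sᶜ (by simp)
      (fun v => w (phk (combine S q q') v))]
    exact Finset.prod_congr rfl fun v _ => by rw [phk_combine_not_mem]

lemma forest_sum_decompose (w : ℕ → K) (a : α) :
    ∑ p : {p : α → Option α // PForest p}, ∏ v : α, w (phk p.1 v) =
      ∑ S : Finset α, if a ∈ S then
        Tsum w S.card * Fsum w (Fintype.card α - S.card) else 0 := by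
  classical
  have step1 : ∀ p : {p : α → Option α // PForest p},
      (∏ v : α, w (phk p.1 v)) = ∑ S : Finset α,
        if (∀ u, u ∈ S ↔ sameTree p.1 a u) then ∏ v : α, w (phk p.1 v) else 0 := by
    intro p
    have hS0 : ∀ u, u ∈ Finset.univ.filter (sameTree p.1 a) ↔ sameTree p.1 a u := by
      intro u; simp
    rw [Finset.sum_eq_single (Finset.univ.filter (sameTree p.1 a))
      (fun S _ hne => if_neg (fun hC => hne (Finset.ext fun u => (hC u).trans ((hS0 u).symm))))
      (fun h => absurd (Finset.mem_univ _) h), if_pos hS0]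
  calc ∑ p : {p : α → Option α // PForest p}, ∏ v : α, w (phk p.1 v)
      = ∑ p : {p : α → Option α // PForest p}, ∑ S : Finset α,
          if (∀ u, u ∈ S ↔ sameTree p.1 a u) then ∏ v : α, w (phk p.1 v) else 0 :=
        Finset.sum_congr rfl fun p _ => step1 p
    _ = ∑ S : Finset α, ∑ p : {p : α → Option α // PForest p},
          if (∀ u, u ∈ S ↔ sameTree p.1 a u) then ∏ v : α, w (phk p.1 v) else 0 :=
        Finset.sum_comm
    _ = _ := by
      refine Finset.sum_congr rfl fun S _ => ?_
      by_cases ha : a ∈ S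
      · rw [if_pos ha]
        rw [← Finset.sum_filter,
          Finset.sum_subtype (p := fun p : {p : α → Option α // PForest p} =>
            ∀ u, u ∈ S ↔ sameTree p.1 a u) _ (fun x => by simp)
            (fun p : {p : α → Option α // PForest p} => ∏ v : α, w (phk p.1 v)),
          ← Equiv.sum_comp (compE a ha)
            (fun p : {p : {p : α → Option α // PForest p} //
              ∀ u, u ∈ S ↔ sameTree p.1 a u} => ∏ v : α, w (phk p.1.1 v))]
        have : ∀ x, (∏ v : α, w (phk (((compE a ha) x) : {p : α → Option α // PForest p}).1 v)) =
            ((∏ v : {v : α // v ∈ S}, w (phk x.1.1 v)) *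
              ∏ v : {v : α // v ∉ S}, w (phk x.2.1 v)) := by
          intro x
          exact prod_weight_combine w x.1.1 x.2.1
        rw [Fintype.sum_congr _ _ this, Fintype.sum_prod_type]
        dsimp only
        rw [← Finset.sum_mul_sum]
        rw [tree_sum_card, forest_sum_card]
        congr 2
        · exact Fintype.card_coe S
        · rw [Fintype.card_subtype_compl, Fintype.card_coe]
      · rw [if_neg ha]
        refine Finset.sum_eq_zero fun p _ => if_neg (fun hC => ha ?_)
        exact (hC a).mpr (sameTree_self p.2 a)

lemma count_subsets (a : α) (j : ℕ) :
    (Finset.univ.filter (fun S : Finset α => a ∈ S ∧ S.card = j + 1)).card =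
      (Fintype.card α - 1).choose j := by
  classical
  have hc : (Fintype.card α - 1).choose j = (Finset.powersetCard j (Finset.univ.erase a)).card := by
    rw [Finset.card_powersetCard, Finset.card_erase_of_mem (Finset.mem_univ a), Finset.card_univ]
  rw [hc]
  refine Finset.card_bij' (fun S _ => S.erase a) (fun T _ => insert a T) ?hi ?hj ?li ?ri
  case hi =>
    intro S hS
    simp only [Finset.mem_filter, Finset.mem_univ, true_and] at hS
    rw [Finset.mem_powersetCard]
    exact ⟨fun x hx => Finset.mem_erase.mpr ⟨(Finset.mem_erase.mp hx).1, Finset.mem_univ _⟩,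
      by rw [Finset.card_erase_of_mem hS.1, hS.2]; rfl⟩
  case hj =>
    intro T hT
    rw [Finset.mem_powersetCard] at hT
    have haT : a ∉ T := fun h => (Finset.mem_erase.mp (hT.1 h)).1 rfl
    simp only [Finset.mem_filter, Finset.mem_univ, true_and]
    exact ⟨Finset.mem_insert_self a T, by rw [Finset.card_insert_of_notMem haT, hT.2]⟩
  case li =>
    intro S hS
    simp only [Finset.mem_filter, Finset.mem_univ, true_and] at hS
    exact Finset.insert_erase hS.1
  case ri =>
    intro T hT
    rw [Finset.mem_powersetCard] at hT
    have haT : a ∉ T := fun h => (Finset.mem_erase.mp (hT.1 h)).1 rfl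
    exact Finset.erase_insert haT

lemma lemmaB (w : ℕ → K) (m : ℕ) (hm : 0 < m) :
    Fsum w m = ∑ i ∈ Finset.range m,
      ((m - 1).choose i : K) * (Tsum w (i + 1) * Fsum w (m - 1 - i)) := by
  classical
  have a : Fin m := ⟨0, hm⟩
  have h1 := forest_sum_decompose (α := Fin m) w a
  rw [Fintype.card_fin] at h1
  rw [show Fsum w m = ∑ p : {p : Fin m → Option (Fin m) // PForest p},
      ∏ v : Fin m, w (phk p.1 v) from rfl, h1, ← Finset.sum_filter]
  have hmap : ∀ S ∈ Finset.univ.filter (fun S : Finset (Fin m) => a ∈ S),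
      S.card ∈ Finset.range (m + 1) := by
    intro S _
    rw [Finset.mem_range, Nat.lt_succ_iff]
    exact (Finset.card_le_univ S).trans (by simp)
  rw [← Finset.sum_fiberwise_of_maps_to hmap
    (fun S => Tsum w S.card * Fsum w (m - S.card))]
  have hterm : ∀ j ∈ Finset.range (m + 1),
      (∑ S ∈ (Finset.univ.filter (fun S : Finset (Fin m) => a ∈ S)).filter
        (fun S => S.card = j), Tsum w S.card * Fsum w (m - S.card)) =
      ((Finset.univ.filter (fun S : Finset (Fin m) => a ∈ S ∧ S.card = j)).card : K) *
        (Tsum w j * Fsum w (m - j)) := by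
    intro j _
    rw [Finset.filter_filter]
    rw [Finset.sum_congr rfl (fun S hS => by
      rw [(Finset.mem_filter.mp hS).2.2]), Finset.sum_const, nsmul_eq_mul]
  rw [Finset.sum_congr rfl hterm, Finset.sum_range_succ']
  have hzero : ((Finset.univ.filter
      (fun S : Finset (Fin m) => a ∈ S ∧ S.card = 0)).card : K) * (Tsum w 0 * Fsum w (m - 0)) = 0 := by
    have : Finset.univ.filter (fun S : Finset (Fin m) => a ∈ S ∧ S.card = 0) = ∅ := by
      rw [Finset.filter_eq_empty_iff]
      rintro S - ⟨haS, hc⟩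
      rw [Finset.card_eq_zero] at hc
      subst hc
      exact absurd haS (Finset.notMem_empty a)
    rw [this]; simp
  rw [hzero, add_zero]
  refine Finset.sum_congr rfl fun i _ => ?_
  rw [count_subsets a i, Fintype.card_fin, show m - (i + 1) = m - 1 - i from by omega]

end LemmaB

section Final

lemma fsum_zero {K : Type*} [CommRing K] (w : ℕ → K) : Fsum w 0 = 1 := by
  rw [Fsum]
  have hcard : Fintype.card {p : Fin 0 → Option (Fin 0) // PForest p} = 1 := by
    rw [Fintype.card_eq_one_iff]
    exact ⟨⟨fun v => v.elim0, fun v => v.elim0⟩, fun y => Subtype.ext (funext fun v => v.elim0)⟩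
  rw [Finset.sum_congr rfl (fun p _ => by rw [Finset.univ_eq_empty, Finset.prod_empty]),
    Finset.sum_const, Finset.card_univ, hcard, one_smul]

noncomputable def wgt {K : Type*} (ρ : ℕ+ → K) [Zero K] : ℕ → K :=
  fun k => if h : 0 < k then ρ ⟨k, h⟩ else 0

lemma wgt_hook {K : Type*} [Zero K] (ρ : ℕ+ → K) {n : ℕ} (p : Fin n → Option (Fin n))
    (v : Fin n) : wgt ρ (phk p v) = ρ (hook p v) := by
  exact dif_pos (hookLen_pos p v)

lemma finsum_trees {K : Type*} [CommRing K] (ρ : ℕ+ → K) (n : ℕ) :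
    (∑ᶠ p : {p : Fin n → Option (Fin n) // IsRTree p},
      ∏ v : Fin n, ρ (hook (p : Fin n → Option (Fin n)) v)) = Tsum (wgt ρ) n := by
  calc (∑ᶠ p : {p : Fin n → Option (Fin n) // IsRTree p},
        ∏ v : Fin n, ρ (hook (p : Fin n → Option (Fin n)) v))
      = ∑ᶠ p : {p : Fin n → Option (Fin n) // PTree p},
        ∏ v : Fin n, ρ (hook (p : Fin n → Option (Fin n)) v) := rfl
    _ = ∑ p : {p : Fin n → Option (Fin n) // PTree p},
        ∏ v : Fin n, ρ (hook (p : Fin n → Option (Fin n)) v) := finsum_eq_sum_of_fintype _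
    _ = Tsum (wgt ρ) n :=
        Finset.sum_congr rfl fun p _ => Finset.prod_congr rfl fun v _ => (wgt_hook ρ p.1 v).symm

end Final

/-- The expansion formula for labeled rooted trees.  Here `g` plays the role of
`e^{f(x)}`, which is characterized among formal power series (over a field of
characteristic zero) by `g(0) = 1` and `g' = f' · g`. -/
theorem expansion_formula_labeled_trees {K : Type*} [Field K] [CharZero K]
    (ρ : ℕ+ → K) (f g : PowerSeries K)
    (h0 : PowerSeries.constantCoeff f = 0)
    (hf : ∀ n : ℕ, 1 ≤ n → PowerSeries.coeff n f =
      (∑ᶠ p : {p : Fin n → Option (Fin n) // IsRTree p},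
        ∏ v : Fin n, ρ (hook (p : Fin n → Option (Fin n)) v)) / (n.factorial : K))
    (hg0 : PowerSeries.constantCoeff g = 1)
    (hg : PowerSeries.derivativeFun g = PowerSeries.derivativeFun f * g)
    (n : ℕ+) (hne : PowerSeries.coeff ((n : ℕ) - 1) g ≠ 0) :
    ρ n = PowerSeries.coeff (n : ℕ) f / PowerSeries.coeff ((n : ℕ) - 1) g := by
  classical
  have hfact : ∀ m : ℕ, (m.factorial : K) ≠ 0 :=
    fun m => Nat.cast_ne_zero.mpr (Nat.factorial_ne_zero m)
  have hfT : ∀ m : ℕ, 1 ≤ m →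
      PowerSeries.coeff m f = Tsum (wgt ρ) m / (m.factorial : K) := by
    intro m hm; rw [hf m hm, finsum_trees]
  have hF : ∀ m : ℕ, (m.factorial : K) * PowerSeries.coeff m g = Fsum (wgt ρ) m := by
    intro m
    induction m using Nat.strong_induction_on with
    | _ m ih =>
      cases m with
      | zero =>
        rw [Nat.factorial_zero, Nat.cast_one, one_mul, PowerSeries.coeff_zero_eq_constantCoeff,
          hg0, fsum_zero]
      | succ M =>
        have hode := congrArg (PowerSeries.coeff M) hg
        simp only [show ∀ h : PowerSeries K, PowerSeries.derivativeFun h = PowerSeries.derivative K h from fun _ => rfl] at hode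
        rw [PowerSeries.coeff_derivativeFun, PowerSeries.coeff_mul,
          Finset.Nat.sum_antidiagonal_eq_sum_range_succ_mk] at hode
        have hterm : ∀ i ∈ Finset.range (M + 1),
            PowerSeries.coeff i (PowerSeries.derivativeFun f) * PowerSeries.coeff (M - i) g
            = (M.choose i : K) * (Tsum (wgt ρ) (i + 1) * Fsum (wgt ρ) (M - i))
                / (M.factorial : K) := by
          intro i hi
          have hiM : i ≤ M := Nat.lt_succ_iff.mp (Finset.mem_range.mp hi)
          have hgi : PowerSeries.coeff (M - i) g
              = Fsum (wgt ρ) (M - i) / (((M - i).factorial : ℕ) : K) := by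
            rw [eq_div_iff (hfact _), mul_comm, ih (M - i) (by omega)]
          simp only [show ∀ h : PowerSeries K, PowerSeries.derivativeFun h = PowerSeries.derivative K h from fun _ => rfl]
          rw [PowerSeries.coeff_derivativeFun, hfT (i + 1) (Nat.le_add_left 1 i), hgi,
            div_mul_eq_mul_div, div_mul_div_comm,
            div_eq_div_iff (mul_ne_zero (hfact (i + 1)) (hfact (M - i))) (hfact M)]
          have hnat : (i + 1) * M.factorial
              = M.choose i * ((i + 1).factorial * (M - i).factorial) := by
            rw [Nat.factorial_succ, ← Nat.choose_mul_factorial_mul_factorial hiM]; ring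
          have hkey : ((i : K) + 1) * (M.factorial : K)
              = (M.choose i : K) * (((i + 1).factorial : K) * ((M - i).factorial : K)) := by
            exact_mod_cast congrArg (Nat.cast (R := K)) hnat
          push_cast at hkey
          linear_combination (Tsum (wgt ρ) (i + 1) * Fsum (wgt ρ) (M - i)) * hkey
        rw [lemmaB (wgt ρ) (M + 1) (Nat.succ_pos M)]
        simp only [Nat.add_sub_cancel]
        simp only [show ∀ h : PowerSeries K, PowerSeries.derivativeFun h = PowerSeries.derivative K h from fun _ => rfl] at hterm
        rw [Finset.sum_congr rfl hterm, ← Finset.sum_div, eq_div_iff (hfact M)] at hode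
        rw [← hode, Nat.factorial_succ]
        push_cast
        ring
  have hn : 0 < (n : ℕ) := n.pos
  have hwn : wgt ρ (n : ℕ) = ρ n := by
    rw [wgt, dif_pos hn]
    exact congrArg ρ (Subtype.ext rfl)
  have hfn : PowerSeries.coeff (n : ℕ) f
      = ρ n * PowerSeries.coeff ((n : ℕ) - 1) g := by
    rw [hfT (n : ℕ) hn, lemmaA (wgt ρ) (n : ℕ), ← hF ((n : ℕ) - 1), hwn]
    have hfac : (((n : ℕ)).factorial : K) = ((n : ℕ) : K) * ((((n : ℕ) - 1).factorial : ℕ) : K) := by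
      rw_mod_cast [Nat.mul_factorial_pred hn.ne']
    have hnz : (((n : ℕ)) : K) ≠ 0 := Nat.cast_ne_zero.mpr hn.ne'
    rw [hfac, div_eq_iff (mul_ne_zero hnz (hfact _))]
    ring
  rw [hfn, mul_div_assoc, div_self hne, mul_one]
end

section
/- For every n ≥ 1, Σ_{T ∈ T(n)} ∏_{v ∈ T} 1/(h_v · B_{h_v − 1}) = 1, where T(n) is the set of labeled rooted trees on vertex set {1,...,n} and B_m is the m-th Bell number (the number of set partitions of an m-element set, with B_0 = 1). -/
/-- The `m`-th Bell number: the number of set partitions (equivalently, of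
equivalence relations) of an `m`-element set. -/
noncomputable def bellNumber (m : ℕ) : ℕ := Nat.card (Setoid (Fin m))
namespace BellHook

open Relation Finset

variable {α : Type} {β : Type}

def pRel (p : α → Option α) : α → α → Prop := fun a b => p a = some b

noncomputable def hk (p : α → Option α) (v : α) : ℕ :=
  Nat.card {u : α // ReflTransGen (pRel p) u v}

def IsForest (p : α → Option α) : Prop := ∀ v, ¬ TransGen (pRel p) v v

def IsTree (p : α → Option α) : Prop := IsForest p ∧ ∃! r, p r = none

noncomputable def term (p : α → Option α) (v : α) : ℚ :=
  1 / ((hk p v : ℚ) * (bellNumber (hk p v - 1) : ℚ))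

noncomputable def wgt [Fintype α] (p : α → Option α) : ℚ := ∏ v, term p v

lemma pRel_functional (p : α → Option α) {a b c : α} (h1 : pRel p a b) (h2 : pRel p a c) :
    b = c := by
  unfold pRel at h1 h2; rw [h1] at h2; exact Option.some_injective _ h2

/-- linearity of ancestor chains -/
lemma rtg_total (p : α → Option α) {u a b : α} (h1 : ReflTransGen (pRel p) u a)
    (h2 : ReflTransGen (pRel p) u b) :
    ReflTransGen (pRel p) a b ∨ ReflTransGen (pRel p) b a := by
  induction h1 using ReflTransGen.head_induction_on with
  | refl => exact Or.inl h2
  | @head u c h' h ih =>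
    rcases h2.cases_head with rfl | ⟨c', hc', h2'⟩
    · exact Or.inr (h.head h')
    · exact ih (pRel_functional p h' hc' ▸ h2')

lemma rtg_of_root {p : α → Option α} {r z : α} (hr : p r = none)
    (h : ReflTransGen (pRel p) r z) : z = r := by
  rcases h.cases_head with rfl | ⟨c, hc, -⟩
  · rfl
  · exact absurd hc (by simp [pRel, hr])

lemma root_unique {p : α → Option α} {u r1 r2 : α}
    (h1 : ReflTransGen (pRel p) u r1) (hr1 : p r1 = none)
    (h2 : ReflTransGen (pRel p) u r2) (hr2 : p r2 = none) : r1 = r2 := by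
  rcases rtg_total p h1 h2 with h | h
  · exact (rtg_of_root hr1 h).symm
  · exact rtg_of_root hr2 h

lemma root_exists [Finite α] {p : α → Option α} (hf : IsForest p) (u : α) :
    ∃ r, p r = none ∧ ReflTransGen (pRel p) u r := by
  have hwf : WellFounded (fun a b => pRel p b a) := by
    have htr : IsTrans α (TransGen (fun a b => pRel p b a)) := ⟨fun _ _ _ => TransGen.trans⟩
    have hirr : IsIrrefl α (TransGen (fun a b => pRel p b a)) :=
      ⟨fun v hv => hf v (Relation.transGen_swap.mp hv)⟩
    exact @Subrelation.wf α (TransGen fun a b => pRel p b a) (fun a b => pRel p b a)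
      (fun h => TransGen.single h)
      (@Finite.wellFounded_of_trans_of_irrefl _ _ _ htr hirr)
  induction u using hwf.induction with
  | _ u ih =>
    rcases h : p u with _ | c
    · exact ⟨u, h, .refl⟩
    · obtain ⟨r, hr, hr2⟩ := ih c h
      exact ⟨r, hr, hr2.head h⟩

section transport

variable {p : α → Option α} {q : β → Option β} {f : β → α}

lemma rtg_fwd (hrel : ∀ b b', q b = some b' → p (f b) = some (f b'))
    {u v : β} (h : ReflTransGen (pRel q) u v) : ReflTransGen (pRel p) (f u) (f v) := by
  induction h with
  | refl => exact .refl
  | tail _ h2 ih => exact ih.tail (hrel _ _ h2)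

lemma tg_fwd (hrel : ∀ b b', q b = some b' → p (f b) = some (f b'))
    {u v : β} (h : TransGen (pRel q) u v) : TransGen (pRel p) (f u) (f v) := by
  induction h with
  | single h => exact .single (hrel _ _ h)
  | tail _ h2 ih => exact ih.tail (hrel _ _ h2)

lemma rtg_bwd (hinj : Function.Injective f)
    (hrel : ∀ b b', q b = some b' ↔ p (f b) = some (f b'))
    (hcl : ∀ a b, p a = some (f b) → ∃ a', f a' = a)
    {a : α} {v : β} (h : ReflTransGen (pRel p) a (f v)) :
    ∃ u, f u = a ∧ ReflTransGen (pRel q) u v := by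
  induction h using ReflTransGen.head_induction_on with
  | refl => exact ⟨v, rfl, .refl⟩
  | head h1 _ ih =>
    obtain ⟨u, rfl, hu⟩ := ih
    obtain ⟨a', rfl⟩ := hcl _ _ h1
    exact ⟨a', rfl, hu.head ((hrel _ _).2 h1)⟩

lemma tg_bwd_cycle (hinj : Function.Injective f)
    (hrel : ∀ b b', q b = some b' ↔ p (f b) = some (f b'))
    (hcl : ∀ a b, p a = some (f b) → ∃ a', f a' = a)
    {v : β} (h : TransGen (pRel p) (f v) (f v)) : TransGen (pRel q) v v := by
  obtain ⟨c, h1, h2⟩ := (TransGen.head'_iff).1 h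
  obtain ⟨u, rfl, hu⟩ := rtg_bwd hinj hrel hcl h2
  exact TransGen.head'_iff.2 ⟨u, (hrel _ _).2 h1, hu⟩

lemma hk_transport (hinj : Function.Injective f)
    (hrel : ∀ b b', q b = some b' ↔ p (f b) = some (f b'))
    (hcl : ∀ a b, p a = some (f b) → ∃ a', f a' = a)
    (v : β) : hk q v = hk p (f v) := by
  apply Nat.card_congr
  refine Equiv.ofBijective (fun u => ⟨f u.1, rtg_fwd (fun b b' => (hrel b b').1) u.2⟩) ⟨?_, ?_⟩
  · intro a b hab
    exact Subtype.ext (hinj (congrArg Subtype.val hab))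
  · rintro ⟨a, ha⟩
    obtain ⟨u, rfl, hu⟩ := rtg_bwd hinj hrel hcl ha
    exact ⟨⟨u, hu⟩, rfl⟩

lemma term_transport (hinj : Function.Injective f)
    (hrel : ∀ b b', q b = some b' ↔ p (f b) = some (f b'))
    (hcl : ∀ a b, p a = some (f b) → ∃ a', f a' = a)
    (v : β) : term q v = term p (f v) := by
  unfold term; rw [hk_transport hinj hrel hcl]

end transport

end BellHook
section part2
namespace BellHook
open Relation Finset
open scoped Classical

variable {α : Type} {β : Type}

instance {γ : Type} [Finite γ] : Finite (Setoid γ) :=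
  Finite.of_injective (fun s : Setoid γ => s.r)
    (fun s t h => Setoid.ext fun a b => iff_of_eq (congrFun (congrFun h a) b))

instance {γ : Type} : Nonempty (Setoid γ) := ⟨⟨Eq, eq_equivalence⟩⟩

lemma bell_pos (m : ℕ) : 0 < bellNumber m := Nat.card_pos

lemma setoid_card_congr (e : β ≃ α) : Nat.card (Setoid α) = Nat.card (Setoid β) :=
  Nat.card_congr
    ⟨fun s => Setoid.comap e s, fun s => Setoid.comap e.symm s,
     fun s => Setoid.ext fun a b => by simp [Setoid.comap_rel],
     fun s => Setoid.ext fun a b => by simp [Setoid.comap_rel]⟩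

lemma natCard_setoid_eq_bell (γ : Type) [Fintype γ] :
    Nat.card (Setoid γ) = bellNumber (Fintype.card γ) :=
  setoid_card_congr (Fintype.equivFin γ).symm

noncomputable def treeFinset (β : Type) [Fintype β] : Finset (β → Option β) :=
  Finset.univ.filter IsTree

noncomputable def forestFinset (β : Type) [Fintype β] : Finset (β → Option β) :=
  Finset.univ.filter IsForest

noncomputable def treeSum (β : Type) [Fintype β] : ℚ := ∑ p ∈ treeFinset β, wgt p

noncomputable def forestSum (β : Type) [Fintype β] : ℚ := ∑ p ∈ forestFinset β, wgt p

section restrict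

variable (p : α → Option α) (P : α → Prop)

noncomputable def restr : {v // P v} → Option {v // P v} :=
  fun v => (p ↑v).bind (fun a => if h : P a then some ⟨a, h⟩ else none)

variable {p P}

lemma restr_rel (hcross : ∀ a b, p a = some b → (P a ↔ P b)) :
    ∀ (b b' : {v // P v}), restr p P b = some b' ↔ p ↑b = some ↑b' := by
  intro b b'
  unfold restr
  cases h : p (↑b : α) with
  | none => simp
  | some a =>
    have hPa : P a := (hcross _ _ h).1 b.2
    simp [hPa, Subtype.ext_iff]

lemma restr_cl (hcross : ∀ a b, p a = some b → (P a ↔ P b)) :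
    ∀ (a : α) (b : {v // P v}), p a = some ↑b → ∃ a' : {v // P v}, ↑a' = a :=
  fun a b h => ⟨⟨a, (hcross _ _ h).2 b.2⟩, rfl⟩

lemma hk_restr (hcross : ∀ a b, p a = some b → (P a ↔ P b)) (v : {v // P v}) :
    hk (restr p P) v = hk p ↑v :=
  hk_transport Subtype.val_injective (restr_rel hcross) (restr_cl hcross) v

lemma restr_rel_fwd : ∀ (b b' : {v // P v}), restr p P b = some b' → p ↑b = some ↑b' := by
  intro b b' h
  unfold restr at h
  cases hpb : p (↑b : α) with
  | none => rw [hpb] at h; simp at h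
  | some a =>
    rw [hpb] at h
    simp only [Option.bind_some] at h
    split at h
    · simp only [Option.some.injEq] at h
      subst h
      rfl
    · simp at h

lemma forest_restr (hf : IsForest p) : IsForest (restr p P) :=
  fun v hv => hf ↑v (tg_fwd (f := Subtype.val) restr_rel_fwd hv)

lemma forest_of_parts (hcross : ∀ a b, p a = some b → (P a ↔ P b))
    (h1 : IsForest (restr p P)) (h2 : IsForest (restr p (fun v => ¬ P v))) :
    IsForest p := by
  intro v hv
  by_cases hP : P v
  · exact h1 ⟨v, hP⟩ (tg_bwd_cycle Subtype.val_injective (restr_rel hcross)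
      (restr_cl hcross) hv)
  · have hcross' : ∀ a b, p a = some b → (¬ P a ↔ ¬ P b) :=
      fun a b h => not_congr (hcross a b h)
    exact h2 ⟨v, hP⟩ (tg_bwd_cycle Subtype.val_injective (restr_rel hcross')
      (restr_cl hcross') hv)

lemma wgt_split [Fintype α] (hcross : ∀ a b, p a = some b → (P a ↔ P b)) :
    wgt p = wgt (restr p P) * wgt (restr p (fun v => ¬ P v)) := by
  have hcross' : ∀ a b, p a = some b → (¬ P a ↔ ¬ P b) :=
    fun a b h => not_congr (hcross a b h)
  unfold wgt
  rw [← Fintype.prod_subtype_mul_prod_subtype P (term p)]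
  congr 1
  · exact (Fintype.prod_congr _ _ (fun v =>
      term_transport Subtype.val_injective (restr_rel hcross) (restr_cl hcross) v)).symm
  · exact (Fintype.prod_congr _ _ (fun v =>
      term_transport Subtype.val_injective (restr_rel hcross') (restr_cl hcross') v)).symm

end restrict

section equivTransport

variable (e : β ≃ α)

noncomputable def emap (p : α → Option α) : β → Option β := fun b => (p (e b)).map e.symm

variable {e}

lemma emap_rel (p : α → Option α) :
    ∀ (b b' : β), emap e p b = some b' ↔ p (e b) = some (e b') := by
  intro b b'
  unfold emap
  rw [Option.map_eq_some_iff]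
  constructor
  · rintro ⟨a, ha, rfl⟩; rwa [e.apply_symm_apply]
  · intro h; exact ⟨e b', h, by simp⟩

lemma emap_cl (p : α → Option α) :
    ∀ (a : α) (b : β), p a = some (e b) → ∃ a', e a' = a :=
  fun a _ _ => ⟨e.symm a, e.apply_symm_apply a⟩

lemma emap_emap_symm (p : α → Option α) : emap e.symm (emap e p) = p := by
  funext a
  simp [emap]

lemma emap_symm_emap (q : β → Option β) : emap e (emap e.symm q) = q := by
  funext b
  simp [emap]

lemma forest_emap {p : α → Option α} (hf : IsForest p) : IsForest (emap e p) :=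
  fun v hv => hf (e v) (tg_fwd (f := e) (fun b b' => (emap_rel p b b').1) hv)

lemma tree_emap {p : α → Option α} (ht : IsTree p) : IsTree (emap e p) := by
  obtain ⟨hf, r, hr, hu⟩ := ht
  refine ⟨forest_emap hf, e.symm r, ?_, ?_⟩
  · simp [emap, hr]
  · intro b hb
    have : p (e b) = none := by
      simpa [emap, Option.map_eq_none_iff] using hb
    rw [← hu (e b) this]
    simp

lemma wgt_emap [Fintype α] [Fintype β] (p : α → Option α) : wgt (emap e p) = wgt p := by
  unfold wgt
  rw [← e.prod_comp (term p)]
  exact Fintype.prod_congr _ _ (fun v =>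
    term_transport e.injective (emap_rel p) (emap_cl p) v)

lemma treeSum_congr (e : β ≃ α) [Fintype α] [Fintype β] : treeSum α = treeSum β := by
  unfold treeSum treeFinset
  refine Finset.sum_nbij' (i := emap e) (j := emap e.symm) ?_ ?_ ?_ ?_ ?_
  · intro p hp
    simp only [mem_filter, mem_univ, true_and] at hp ⊢
    exact tree_emap hp
  · intro q hq
    simp only [mem_filter, mem_univ, true_and] at hq ⊢
    exact tree_emap hq
  · intro p _; exact emap_emap_symm p
  · intro q _; exact emap_symm_emap q
  · intro p _; exact (wgt_emap p).symm

lemma forestSum_congr (e : β ≃ α) [Fintype α] [Fintype β] : forestSum α = forestSum β := by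
  unfold forestSum forestFinset
  refine Finset.sum_nbij' (i := emap e) (j := emap e.symm) ?_ ?_ ?_ ?_ ?_
  · intro p hp
    simp only [mem_filter, mem_univ, true_and] at hp ⊢
    exact forest_emap hp
  · intro q hq
    simp only [mem_filter, mem_univ, true_and] at hq ⊢
    exact forest_emap hq
  · intro p _; exact emap_emap_symm p
  · intro q _; exact emap_symm_emap q
  · intro p _; exact (wgt_emap p).symm

end equivTransport

end BellHook
end part2
section part3
namespace BellHook
open Relation Finset
open scoped Classical

variable {α : Type}

noncomputable def cls [Fintype α] (x : α) (s : Setoid α) : Finset α :=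
  Finset.univ.filter (fun u => s x u)

lemma mem_cls [Fintype α] {x u : α} {s : Setoid α} : u ∈ cls x s ↔ s x u := by
  simp [cls]

/-- The glue of a setoid on the complement of `S` with the full block `S`. -/
noncomputable def glueSetoid [Fintype α] (S : Finset α) (t : Setoid {u : α // u ∉ S}) :
    Setoid α where
  r a b := (a ∈ S ∧ b ∈ S) ∨ (∃ (ha : a ∉ S) (hb : b ∉ S), t ⟨a, ha⟩ ⟨b, hb⟩)
  iseqv := by
    constructor
    · intro a
      by_cases h : a ∈ S
      · exact Or.inl ⟨h, h⟩
      · exact Or.inr ⟨h, h, t.refl _⟩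
    · rintro a b (⟨h1, h2⟩ | ⟨h1, h2, h3⟩)
      · exact Or.inl ⟨h2, h1⟩
      · exact Or.inr ⟨h2, h1, t.symm h3⟩
    · rintro a b c (⟨h1, h2⟩ | ⟨h1, h2, h3⟩) (⟨g1, g2⟩ | ⟨g1, g2, g3⟩)
      · exact Or.inl ⟨h1, g2⟩
      · exact absurd h2 g1
      · exact absurd g1 h2
      · exact Or.inr ⟨h1, g2, t.trans h3 g3⟩

lemma glueSetoid_rel [Fintype α] (S : Finset α) (t : Setoid {u : α // u ∉ S}) (a b : α) :
    glueSetoid S t a b ↔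
      (a ∈ S ∧ b ∈ S) ∨ (∃ (ha : a ∉ S) (hb : b ∉ S), t ⟨a, ha⟩ ⟨b, hb⟩) :=
  Iff.rfl

lemma setoid_card_rec [Fintype α] (x : α) :
    Nat.card (Setoid α) =
      ∑ S ∈ Finset.univ.filter (fun S : Finset α => x ∈ S),
        Nat.card (Setoid {u : α // u ∉ S}) := by
  haveI : Fintype (Setoid α) := Fintype.ofFinite _
  have h1 : Nat.card (Setoid α)
      = ∑ S : Finset α, Nat.card {s : Setoid α // cls x s = S} := by
    rw [Nat.card_congr (Equiv.sigmaFiberEquiv (cls x)).symm, Nat.card_eq_fintype_card,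
      Fintype.card_sigma]
    exact Finset.sum_congr rfl (fun S _ => (Nat.card_eq_fintype_card).symm)
  rw [h1]
  rw [← Finset.sum_filter_of_ne (p := fun S : Finset α => x ∈ S) ?_]
  · refine Finset.sum_congr rfl (fun S hS => ?_)
    have hxS : x ∈ S := (Finset.mem_filter.1 hS).2
    apply Nat.card_congr
    refine ⟨fun s => Setoid.comap Subtype.val s.1, fun t => ⟨glueSetoid S t, ?_⟩, ?_, ?_⟩
    · -- cls x (glueSetoid S t) = S
      ext u
      rw [mem_cls, glueSetoid_rel]
      constructor
      · rintro (⟨-, h⟩ | ⟨hx, -, -⟩)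
        · exact h
        · exact absurd hxS hx
      · intro h; exact Or.inl ⟨hxS, h⟩
    · -- left inverse
      rintro ⟨s, hs⟩
      have hmem : ∀ u : α, u ∈ S ↔ s x u := by
        intro u; rw [← hs, mem_cls]
      apply Subtype.ext
      apply Setoid.ext
      intro a b
      rw [glueSetoid_rel]
      constructor
      · rintro (⟨h1, h2⟩ | ⟨h1, h2, h3⟩)
        · exact s.trans (s.symm ((hmem a).1 h1)) ((hmem b).1 h2)
        · exact h3
      · intro h
        by_cases ha : a ∈ S
        · exact Or.inl ⟨ha, (hmem b).2 (s.trans ((hmem a).1 ha) h)⟩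
        · refine Or.inr ⟨ha, fun hb => ha ((hmem a).2 (s.trans ((hmem b).1 hb) (s.symm h))), h⟩
    · -- right inverse
      intro t
      apply Setoid.ext
      rintro ⟨a, ha⟩ ⟨b, hb⟩
      rw [Setoid.comap_rel, glueSetoid_rel]
      constructor
      · rintro (⟨h1, -⟩ | ⟨ha', hb', h3⟩)
        · exact absurd h1 ha
        · exact h3
      · intro h; exact Or.inr ⟨ha, hb, h⟩
  · intro S _ hS
    by_contra hxS
    refine hS ?_
    have : IsEmpty {s : Setoid α // cls x s = S} :=
      ⟨fun ⟨s, hs⟩ => hxS (hs ▸ mem_cls.2 (s.refl x))⟩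
    exact Nat.card_of_isEmpty
end BellHook
end part3
section part4
namespace BellHook
open Relation Finset
open scoped Classical

variable {α : Type}

noncomputable def rootOf [Fintype α] [Nonempty α] (p : α → Option α) (x : α) : α :=
  if h : ∃ r, p r = none ∧ ReflTransGen (pRel p) x r then h.choose else Classical.arbitrary α

lemma rootOf_spec [Fintype α] [Nonempty α] {p : α → Option α} (hf : IsForest p) (x : α) :
    p (rootOf p x) = none ∧ ReflTransGen (pRel p) x (rootOf p x) := by
  have h : ∃ r, p r = none ∧ ReflTransGen (pRel p) x r := by
    obtain ⟨r, h1, h2⟩ := root_exists hf x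
    exact ⟨r, h1, h2⟩
  rw [rootOf, dif_pos h]
  exact h.choose_spec

noncomputable def troot [Fintype α] [Nonempty α] (p : α → Option α) : α :=
  rootOf p (Classical.arbitrary α)

/-- D1 : split the tree sum according to the root. -/
lemma tree_sum_fiber [Fintype α] [Nonempty α] :
    treeSum α = ∑ r : α, ∑ p ∈ (treeFinset α).filter (fun p => p r = none), wgt p := by
  rw [treeSum,
    ← Finset.sum_fiberwise_of_maps_to (g := troot) (fun p _ => Finset.mem_univ _) wgt]
  refine Finset.sum_congr rfl (fun r _ => ?_)
  refine Finset.sum_congr ?_ (fun _ _ => rfl)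
  apply Finset.filter_congr
  intro p hp
  have ht : IsTree p := by simpa [treeFinset] using hp
  constructor
  · rintro rfl
    exact (rootOf_spec ht.1 _).1
  · intro h
    obtain ⟨rr, hrr, hun⟩ := ht.2
    exact (hun _ (rootOf_spec ht.1 _).1).trans (hun _ h).symm

section delRoot

variable (r : α)

noncomputable def delRoot (p : α → Option α) : {v : α // v ≠ r} → Option {v : α // v ≠ r} :=
  fun v => (p ↑v).bind (fun a => if h : a = r then none else some ⟨a, h⟩)

noncomputable def addRoot (q : {v : α // v ≠ r} → Option {v : α // v ≠ r}) :
    α → Option α :=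
  fun a => if h : a = r then none else some (((q ⟨a, h⟩).map Subtype.val).getD r)

variable {r}

lemma delRoot_rel (p : α → Option α) :
    ∀ (b b' : {v : α // v ≠ r}), delRoot r p b = some b' ↔ p ↑b = some ↑b' := by
  intro b b'
  unfold delRoot
  cases h : p (↑b : α) with
  | none => simp
  | some a =>
    by_cases ha : a = r
    · subst ha
      simp only [Option.bind_some, dif_pos rfl]
      constructor
      · intro h; exact absurd h (by simp)
      · intro h
        exact absurd (Option.some_injective _ h).symm b'.2
    · simp [ha, Subtype.ext_iff]

lemma delRoot_cl {p : α → Option α} (hr : p r = none) :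
    ∀ (a : α) (b : {v : α // v ≠ r}), p a = some ↑b → ∃ a' : {v : α // v ≠ r}, ↑a' = a := by
  intro a b h
  refine ⟨⟨a, fun har => ?_⟩, rfl⟩
  rw [har, hr] at h
  exact nomatch h

lemma addRoot_delRoot {p : α → Option α} (ht : IsTree p) (hr : p r = none) :
    addRoot r (delRoot r p) = p := by
  funext a
  unfold addRoot delRoot
  by_cases ha : a = r
  · subst ha; rw [dif_pos rfl, hr]
  · rw [dif_neg ha]
    cases h : p a with
    | none =>
      exfalso
      obtain ⟨rr, hrr, hun⟩ := ht.2
      exact ha ((hun _ h).trans (hun _ hr).symm)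
    | some c =>
      by_cases hc : c = r
      · subst hc; simp
      · simp [hc]

lemma delRoot_addRoot (q : {v : α // v ≠ r} → Option {v : α // v ≠ r}) :
    delRoot r (addRoot r q) = q := by
  funext v
  unfold delRoot addRoot
  rw [dif_neg v.2]
  cases h : q v with
  | none => simp [Subtype.coe_eta, h]
  | some b => simp [Subtype.coe_eta, h, b.2]

lemma addRoot_tree [Fintype α] {q : {v : α // v ≠ r} → Option {v : α // v ≠ r}}
    (hq : IsForest q) : IsTree (addRoot r q) ∧ addRoot r q r = none := by
  have hnone : addRoot r q r = none := dif_pos rfl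
  have hrel : ∀ b b', q b = some b' ↔ addRoot r q ↑b = some ↑b' := by
    intro b b'
    have h := delRoot_rel (r := r) (addRoot r q) b b'
    rwa [delRoot_addRoot q] at h
  have hcl := delRoot_cl (p := addRoot r q) hnone
  have hforest : IsForest (addRoot r q) := by
    intro v hv
    by_cases hveq : v = r
    · subst hveq
      obtain ⟨c, h1, -⟩ := (TransGen.head'_iff).1 hv
      rw [pRel, hnone] at h1
      exact nomatch h1
    · exact hq ⟨v, hveq⟩
        (tg_bwd_cycle Subtype.val_injective hrel hcl (v := ⟨v, hveq⟩) hv)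
  refine ⟨⟨hforest, r, hnone, fun y hy => ?_⟩, hnone⟩
  by_contra hyr
  rw [show y = ↑(⟨y, hyr⟩ : {v : α // v ≠ r}) from rfl] at hy
  unfold addRoot at hy
  rw [dif_neg hyr] at hy
  exact nomatch hy

lemma hk_root [Fintype α] {p : α → Option α} (ht : IsTree p) (hr : p r = none) :
    hk p r = Fintype.card α := by
  have hall : ∀ u, ReflTransGen (pRel p) u r := by
    intro u
    obtain ⟨r', h1, h2⟩ := root_exists ht.1 u
    obtain ⟨rr, hrr, hun⟩ := ht.2
    rwa [(hun _ h1).trans (hun _ hr).symm] at h2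
  rw [hk, Nat.card_congr (Equiv.subtypeUnivEquiv hall), Nat.card_eq_fintype_card]

lemma wgt_tree_split [Fintype α] {p : α → Option α} (ht : IsTree p) (hr : p r = none) :
    wgt p = (((Fintype.card α : ℚ)) * (bellNumber (Fintype.card α - 1) : ℚ))⁻¹ *
      wgt (delRoot r p) := by
  have h1 : wgt p = term p r * ∏ v ∈ Finset.univ.erase r, term p v := by
    rw [wgt, Finset.mul_prod_erase _ _ (Finset.mem_univ r)]
  have h2 : ∏ v ∈ Finset.univ.erase r, term p v
      = ∏ v : {v : α // v ≠ r}, term p ↑v := by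
    apply Finset.prod_subtype
    intro x
    simp [Finset.mem_erase]
  have h3 : ∏ v : {v : α // v ≠ r}, term p ↑v = wgt (delRoot r p) := by
    rw [wgt]
    exact (Fintype.prod_congr _ _ (fun v => term_transport Subtype.val_injective
      (delRoot_rel p) (delRoot_cl hr) v)).symm
  have h4 : term p r
      = (((Fintype.card α : ℚ)) * (bellNumber (Fintype.card α - 1) : ℚ))⁻¹ := by
    rw [term, hk_root ht hr, one_div]
  rw [h1, h2, h3, h4]

/-- D2 : trees rooted at `r` correspond to forests on the complement of `r`. -/
lemma tree_sum_rooted [Fintype α] (r : α) :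
    ∑ p ∈ (treeFinset α).filter (fun p => p r = none), wgt p
      = (((Fintype.card α : ℚ)) * (bellNumber (Fintype.card α - 1) : ℚ))⁻¹ *
        forestSum {v : α // v ≠ r} := by
  rw [forestSum, Finset.mul_sum]
  refine Finset.sum_nbij' (i := delRoot r) (j := addRoot r) ?_ ?_ ?_ ?_ ?_
  · intro p hp
    simp only [treeFinset, forestFinset, Finset.mem_filter, Finset.mem_univ, true_and] at hp ⊢
    exact fun v hv => hp.1.1 ↑v (tg_fwd (f := Subtype.val)
      (fun b b' => (delRoot_rel p b b').1) hv)
  · intro q hq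
    simp only [treeFinset, forestFinset, Finset.mem_filter, Finset.mem_univ, true_and] at hq ⊢
    exact (addRoot_tree hq).imp id (fun h => h)
  · intro p hp
    simp only [treeFinset, Finset.mem_filter, Finset.mem_univ, true_and] at hp
    exact addRoot_delRoot hp.1 hp.2
  · intro q _
    exact delRoot_addRoot q
  · intro p hp
    simp only [treeFinset, Finset.mem_filter, Finset.mem_univ, true_and] at hp
    exact wgt_tree_split hp.1 hp.2

end delRoot

end BellHook
end part4
section part5
namespace BellHook
open Relation Finset
open scoped Classical

variable {α : Type}

lemma wgt_congr_inst {γ : Type} (i1 i2 : Fintype γ) (p : γ → Option γ) :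
    @wgt γ i1 p = @wgt γ i2 p := by
  rw [Subsingleton.elim i1 i2]

noncomputable def comp [Fintype α] [Nonempty α] (p : α → Option α) (x : α) : Finset α :=
  Finset.univ.filter (fun u => ReflTransGen (pRel p) u (rootOf p x))

lemma mem_comp [Fintype α] [Nonempty α] {p : α → Option α} {x u : α} :
    u ∈ comp p x ↔ ReflTransGen (pRel p) u (rootOf p x) := by
  simp [comp]

lemma self_mem_comp [Fintype α] [Nonempty α] {p : α → Option α} (hf : IsForest p) (x : α) :
    x ∈ comp p x := mem_comp.2 (rootOf_spec hf x).2

lemma comp_cross [Fintype α] [Nonempty α] {p : α → Option α} (hf : IsForest p) (x : α) :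
    ∀ a b, p a = some b → (a ∈ comp p x ↔ b ∈ comp p x) := by
  intro a b h
  rw [mem_comp, mem_comp]
  constructor
  · intro ha
    rcases ha.cases_head with rfl | ⟨c, hc, h'⟩
    · rw [(rootOf_spec hf x).1] at h
      exact nomatch h
    · rwa [pRel_functional p hc h] at h'
  · intro hb
    exact hb.head h

section glue

variable (S : Finset α)

noncomputable def glue (t : {u : α // u ∈ S} → Option {u : α // u ∈ S})
    (u : {u : α // u ∉ S} → Option {u : α // u ∉ S}) : α → Option α :=
  fun a => if h : a ∈ S then (t ⟨a, h⟩).map Subtype.val else (u ⟨a, h⟩).map Subtype.val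

variable {S}
variable {t : {u : α // u ∈ S} → Option {u : α // u ∈ S}}
variable {u : {u : α // u ∉ S} → Option {u : α // u ∉ S}}

lemma glue_rel_in :
    ∀ (b b' : {u : α // u ∈ S}), t b = some b' ↔ glue S t u ↑b = some ↑b' := by
  intro b b'
  rw [glue, dif_pos b.2, Option.map_eq_some_iff]
  simp only [Subtype.coe_eta]
  constructor
  · intro h; exact ⟨b', h, rfl⟩
  · rintro ⟨a, ha, haeq⟩
    rwa [Subtype.ext haeq] at ha

lemma glue_rel_out :
    ∀ (b b' : {u : α // u ∉ S}), u b = some b' ↔ glue S t u ↑b = some ↑b' := by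
  intro b b'
  rw [glue, dif_neg b.2, Option.map_eq_some_iff]
  simp only [Subtype.coe_eta]
  constructor
  · intro h; exact ⟨b', h, rfl⟩
  · rintro ⟨a, ha, haeq⟩
    rwa [Subtype.ext haeq] at ha

lemma glue_cl_in :
    ∀ (a : α) (b : {u : α // u ∈ S}), glue S t u a = some ↑b →
      ∃ a' : {u : α // u ∈ S}, ↑a' = a := by
  intro a b h
  by_cases ha : a ∈ S
  · exact ⟨⟨a, ha⟩, rfl⟩
  · rw [glue, dif_neg ha, Option.map_eq_some_iff] at h
    obtain ⟨c, -, hc⟩ := h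
    exact absurd b.2 (hc ▸ c.2)

lemma glue_cl_out :
    ∀ (a : α) (b : {u : α // u ∉ S}), glue S t u a = some ↑b →
      ∃ a' : {u : α // u ∉ S}, ↑a' = a := by
  intro a b h
  by_cases ha : a ∈ S
  · rw [glue, dif_pos ha, Option.map_eq_some_iff] at h
    obtain ⟨c, -, hc⟩ := h
    exact absurd (hc ▸ c.2) b.2
  · exact ⟨⟨a, ha⟩, rfl⟩

lemma glue_forest (ht : IsForest t) (hu : IsForest u) : IsForest (glue S t u) := by
  intro v hv
  by_cases hvS : v ∈ S
  · exact ht ⟨v, hvS⟩ (tg_bwd_cycle Subtype.val_injective glue_rel_in glue_cl_in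
      (v := ⟨v, hvS⟩) hv)
  · exact hu ⟨v, hvS⟩ (tg_bwd_cycle Subtype.val_injective glue_rel_out glue_cl_out
      (v := ⟨v, hvS⟩) hv)

lemma glue_restr (q : α → Option α)
    (hcross : ∀ a b, q a = some b → (a ∈ S ↔ b ∈ S)) :
    glue S (restr q (fun v => v ∈ S)) (restr q (fun v => v ∉ S)) = q := by
  funext a
  unfold glue restr
  by_cases ha : a ∈ S
  · rw [dif_pos ha]
    cases h : q a with
    | none => simp
    | some c =>
      have : c ∈ S := (hcross a c h).1 ha
      simp [this]
  · rw [dif_neg ha]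
    cases h : q a with
    | none => simp
    | some c =>
      have : c ∉ S := fun hc => ha ((hcross a c h).2 hc)
      simp [this]

lemma restr_glue_in : restr (glue S t u) (fun v => v ∈ S) = t := by
  funext v
  unfold restr glue
  rw [dif_pos v.2, Subtype.coe_eta]
  cases h : t v with
  | none => simp
  | some b => simp [b.2]

lemma restr_glue_out : restr (glue S t u) (fun v => v ∉ S) = u := by
  funext v
  unfold restr glue
  rw [dif_neg v.2, Subtype.coe_eta]
  cases h : u v with
  | none => simp
  | some b => simp [b.2]

end glue

end BellHook
end part5
section part6
namespace BellHook
open Relation Finset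
open scoped Classical

variable {α : Type}

lemma tree_reach [Fintype α] {p : α → Option α} (ht : IsTree p) {r : α}
    (hr : p r = none) (u : α) : ReflTransGen (pRel p) u r := by
  obtain ⟨r', h1, h2⟩ := root_exists ht.1 u
  obtain ⟨rr, hrr, hun⟩ := ht.2
  rwa [(hun _ h1).trans (hun _ hr).symm] at h2

lemma restr_in_tree [Fintype α] [Nonempty α] {q : α → Option α} (hq : IsForest q)
    {x : α} {S : Finset α} (hS : comp q x = S) :
    IsTree (restr q (fun v : α => v ∈ S)) := by
  have hcross : ∀ a b, q a = some b → (a ∈ S ↔ b ∈ S) := hS ▸ comp_cross hq x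
  have hr0S : rootOf q x ∈ S := hS ▸ mem_comp.2 ReflTransGen.refl
  refine ⟨forest_restr hq, ⟨rootOf q x, hr0S⟩, ?_, ?_⟩
  · show (q (rootOf q x)).bind _ = none
    rw [(rootOf_spec hq x).1]
    rfl
  · rintro ⟨v, hv⟩ hnone
    cases h : q v with
    | some c =>
      have hc : c ∈ S := (hcross _ _ h).1 hv
      have : restr q (fun v : α => v ∈ S) ⟨v, hv⟩ = some ⟨c, hc⟩ := by
        unfold restr
        simp [h, hc]
      rw [this] at hnone
      exact nomatch hnone
    | none =>
      have hvcomp : ReflTransGen (pRel q) v (rootOf q x) := mem_comp.1 (hS ▸ hv)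
      exact Subtype.ext (rtg_of_root h hvcomp).symm

lemma comp_glue [Fintype α] [Nonempty α] {x : α} {S : Finset α} (hxS : x ∈ S)
    {t : {u : α // u ∈ S} → Option {u : α // u ∈ S}}
    {u : {u : α // u ∉ S} → Option {u : α // u ∉ S}}
    (ht : IsTree t) (hu : IsForest u) : comp (glue S t u) x = S := by
  set p := glue S t u with hp_def
  have hp : IsForest p := glue_forest ht.1 hu
  obtain ⟨rt, hrt, hun⟩ := ht.2
  have hrtnone : p ↑rt = none := by
    rw [hp_def]
    unfold glue
    rw [dif_pos rt.2, Subtype.coe_eta, hrt]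
    rfl
  have hreach : ∀ w : α, w ∈ S → ReflTransGen (pRel p) w ↑rt := by
    intro w hw
    exact rtg_fwd (f := Subtype.val) (fun b b' => (glue_rel_in b b').1)
      (tree_reach ht hrt ⟨w, hw⟩)
  have hroot : rootOf p x = ↑rt :=
    root_unique (rootOf_spec hp x).2 (rootOf_spec hp x).1 (hreach x hxS) hrtnone
  ext w
  rw [mem_comp, hroot]
  constructor
  · intro hw
    obtain ⟨w', hw', -⟩ := rtg_bwd Subtype.val_injective glue_rel_in glue_cl_in hw
    exact hw' ▸ w'.2
  · exact hreach w

/-- D3 : the fiber of forests whose component of `x` is `S`. -/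
lemma forest_fiber_eq [Fintype α] [Nonempty α] (x : α) {S : Finset α} (hxS : x ∈ S) :
    ∑ q ∈ (forestFinset α).filter (fun q => comp q x = S), wgt q
      = treeSum {u : α // u ∈ S} * forestSum {u : α // u ∉ S} := by
  rw [treeSum, forestSum, Finset.sum_mul_sum, ← Finset.sum_product']
  refine Finset.sum_nbij'
    (i := fun q => (restr q (fun v => v ∈ S), restr q (fun v => v ∉ S)))
    (j := fun pr => glue S pr.1 pr.2) ?_ ?_ ?_ ?_ ?_
  · intro q hq
    simp only [forestFinset, Finset.mem_filter, Finset.mem_univ, true_and] at hq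
    simp only [Finset.mem_product, treeFinset, forestFinset, Finset.mem_filter,
      Finset.mem_univ, true_and]
    exact ⟨restr_in_tree hq.1 hq.2, forest_restr hq.1⟩
  · rintro ⟨t, u⟩ htu
    simp only [Finset.mem_product, treeFinset, forestFinset, Finset.mem_filter,
      Finset.mem_univ, true_and] at htu
    simp only [forestFinset, Finset.mem_filter, Finset.mem_univ, true_and]
    exact ⟨glue_forest htu.1.1 htu.2, comp_glue hxS htu.1 htu.2⟩
  · intro q hq
    simp only [forestFinset, Finset.mem_filter, Finset.mem_univ, true_and] at hq
    exact glue_restr q (hq.2 ▸ comp_cross hq.1 x)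
  · rintro ⟨t, u⟩ _
    exact Prod.ext restr_glue_in restr_glue_out
  · intro q hq
    simp only [forestFinset, Finset.mem_filter, Finset.mem_univ, true_and] at hq
    refine (wgt_split (hq.2 ▸ comp_cross hq.1 x)).trans ?_
    exact congrArg₂ (· * ·) (wgt_congr_inst _ _ _) (wgt_congr_inst _ _ _)

end BellHook
end part6
section part7
namespace BellHook
open Relation Finset
open scoped Classical

lemma forestSum_fiber (β : Type) [Fintype β] [Nonempty β] (x : β) :
    forestSum β = ∑ S ∈ Finset.univ.filter (fun S : Finset β => x ∈ S),
      ∑ q ∈ (forestFinset β).filter (fun q => comp q x = S), wgt q := by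
  rw [forestSum]
  refine (Finset.sum_fiberwise_of_maps_to ?_ wgt).symm
  intro q hq
  simp only [forestFinset, Finset.mem_filter, Finset.mem_univ, true_and] at hq ⊢
  exact self_mem_comp hq x

theorem main_induction : ∀ N : ℕ,
    (∀ (β : Type) [Fintype β], Fintype.card β = N → 1 ≤ N → treeSum β = 1) ∧
    (∀ (β : Type) [Fintype β], Fintype.card β = N → forestSum β = (bellNumber N : ℚ)) := by
  intro N
  induction N using Nat.strong_induction_on with
  | _ N ih =>
  have tpart : ∀ (β : Type) [Fintype β], Fintype.card β = N → 1 ≤ N → treeSum β = 1 := by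
    intro β _ hcard hN
    haveI : Nonempty β := Fintype.card_pos_iff.1 (by omega)
    have hsub : ∀ r : β, Fintype.card {v : β // v ≠ r} = N - 1 := by
      intro r
      have h1 : Fintype.card {v : β // ¬ v = r} = Fintype.card β -
          Fintype.card {v : β // v = r} := Fintype.card_subtype_compl _
      rw [Fintype.card_subtype_eq, hcard] at h1
      exact h1
    have hforest : ∀ r : β, forestSum {v : β // v ≠ r} = (bellNumber (N - 1) : ℚ) :=
      fun r => (ih (N - 1) (by omega)).2 _ (hsub r)
    rw [tree_sum_fiber]
    have hstep : ∀ r : β,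
        ∑ p ∈ (treeFinset β).filter (fun p => p r = none), wgt p
          = ((N : ℚ) * (bellNumber (N - 1) : ℚ))⁻¹ * (bellNumber (N - 1) : ℚ) := by
      intro r
      rw [tree_sum_rooted, hforest, hcard]
    rw [Finset.sum_congr rfl (fun r _ => hstep r), Finset.sum_const, Finset.card_univ,
      hcard, nsmul_eq_mul]
    have hB : ((bellNumber (N - 1) : ℚ)) ≠ 0 := by
      exact_mod_cast (bell_pos (N - 1)).ne'
    have hNne : (N : ℚ) ≠ 0 := by exact_mod_cast (by omega : N ≠ 0)
    field_simp
  refine ⟨tpart, ?_⟩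
  intro β _ hcard
  rcases Nat.eq_zero_or_pos N with hN0 | hNpos
  · subst hN0
    haveI : IsEmpty β := Fintype.card_eq_zero_iff.1 hcard
    have h1 : forestSum β = 1 := by
      rw [forestSum, forestFinset]
      have huniv : (Finset.univ : Finset (β → Option β)).filter IsForest = Finset.univ := by
        apply Finset.filter_true_of_mem
        intro p _ v
        exact isEmptyElim v
      haveI : Unique (β → Option β) :=
        ⟨⟨fun v => isEmptyElim v⟩, fun f => funext fun v => isEmptyElim v⟩
      rw [huniv, Finset.univ_unique, Finset.sum_singleton, wgt]
      exact Finset.prod_of_isEmpty _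
    have h2 : bellNumber 0 = 1 := by
      rw [bellNumber]
      haveI : Subsingleton (Setoid (Fin 0)) :=
        ⟨fun s t => Setoid.ext fun a b => isEmptyElim a⟩
      haveI : Inhabited (Setoid (Fin 0)) := ⟨⟨Eq, eq_equivalence⟩⟩
      haveI : Unique (Setoid (Fin 0)) := Unique.mk' _
      exact Nat.card_unique
    rw [h1, h2, Nat.cast_one]
  · haveI : Nonempty β := Fintype.card_pos_iff.1 (by omega)
    set x := Classical.arbitrary β with hx
    rw [forestSum_fiber β x]
    have hterm : ∀ S ∈ Finset.univ.filter (fun S : Finset β => x ∈ S),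
        ∑ q ∈ (forestFinset β).filter (fun q => comp q x = S), wgt q
          = (bellNumber (Fintype.card {u : β // u ∉ S}) : ℚ) := by
      intro S hS
      have hxS : x ∈ S := (Finset.mem_filter.1 hS).2
      rw [forest_fiber_eq x hxS]
      have hcardS : Fintype.card {u : β // u ∈ S} = S.card := Fintype.card_coe S
      have hSpos : 1 ≤ S.card := Finset.card_pos.2 ⟨x, hxS⟩
      have hSle : S.card ≤ N := hcard ▸ Finset.card_le_univ S
      have htree : treeSum {u : β // u ∈ S} = 1 := by
        by_cases h : S.card = N
        · exact tpart _ (hcardS.trans h) hNpos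
        · exact (ih S.card (lt_of_le_of_ne hSle h)).1 _ hcardS hSpos
      have hcardC : Fintype.card {u : β // u ∉ S} = N - S.card := by
        have h1 : Fintype.card {u : β // ¬ u ∈ S} = Fintype.card β -
            Fintype.card {u : β // u ∈ S} := Fintype.card_subtype_compl _
        rw [hcardS, hcard] at h1
        exact h1
      have hforest : forestSum {u : β // u ∉ S}
          = (bellNumber (Fintype.card {u : β // u ∉ S}) : ℚ) :=
        (ih _ (by rw [hcardC]; omega)).2 _ rfl
      rw [htree, hforest, one_mul]
    rw [Finset.sum_congr rfl hterm, ← Nat.cast_sum]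
    congr 1
    have hbell : bellNumber N
        = ∑ S ∈ Finset.univ.filter (fun S : Finset β => x ∈ S),
            bellNumber (Fintype.card {u : β // u ∉ S}) := by
      conv_lhs => rw [← hcard, ← natCard_setoid_eq_bell β]
      rw [setoid_card_rec x]
      exact Finset.sum_congr rfl fun S _ => natCard_setoid_eq_bell _
    rw [hbell]
end BellHook
end part7
lemma hookLen_eq_hk {n : ℕ} (p : Fin n → Option (Fin n)) (v : Fin n) :
    hookLen p v = BellHook.hk p v := rfl

lemma isRTree_eq_isTree {n : ℕ} (p : Fin n → Option (Fin n)) :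
    IsRTree p ↔ BellHook.IsTree p := Iff.rfl

set_option maxHeartbeats 1000000 in
open scoped Classical in
/-- The Bell number hook length formula for labeled rooted trees. -/
theorem bell_hook_formula_labeled_trees (n : ℕ) (hn : 1 ≤ n) :
    ∑ᶠ p : {p : Fin n → Option (Fin n) // IsRTree p},
      ∏ v : Fin n,
        1 / ((hookLen (p : Fin n → Option (Fin n)) v : ℚ) *
          (bellNumber (hookLen (p : Fin n → Option (Fin n)) v - 1) : ℚ))
    = 1 := by
  have key : BellHook.treeSum (Fin n) = 1 :=
    (BellHook.main_induction n).1 (Fin n) (Fintype.card_fin n) hn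
  rw [finsum_eq_sum_of_fintype]
  have step1 : ∀ p : {p : Fin n → Option (Fin n) // IsRTree p},
      (∏ v : Fin n,
        1 / ((hookLen (p : Fin n → Option (Fin n)) v : ℚ) *
          (bellNumber (hookLen (p : Fin n → Option (Fin n)) v - 1) : ℚ)))
        = BellHook.wgt (p : Fin n → Option (Fin n)) := by
    intro p
    rw [BellHook.wgt]
    refine Finset.prod_congr rfl fun v _ => ?_
    rw [BellHook.term, hookLen_eq_hk]
  rw [Finset.sum_congr rfl fun p _ => step1 p]
  rw [← key, BellHook.treeSum, BellHook.treeFinset]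
  refine (Finset.sum_subtype _ (fun x => ?_) BellHook.wgt).symm
  simp only [Finset.mem_filter, Finset.mem_univ, true_and]
  exact (isRTree_eq_isTree x).symm
end

section
/- For every n ≥ 1, Σ_{T ∈ T(n)} ∏_{v ∈ T} 1/h_v = (n-1)!, where T(n) is the set of labeled rooted trees on vertex set {1,...,n}. -/
open Relation Finset
open scoped Classical

namespace HookAux

variable {n : ℕ}

/-- A forest supported on the finset `s`. -/
def ForestOn (s : Finset (Fin n)) (p : Fin n → Option (Fin n)) : Prop :=
  (∀ v, v ∉ s → p v = none) ∧ (∀ v w, p v = some w → w ∈ s) ∧ IsRForest p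

noncomputable def forestsOn (s : Finset (Fin n)) : Finset (Fin n → Option (Fin n)) :=
  Finset.univ.filter (ForestOn s)

noncomputable def rootsOf (s : Finset (Fin n)) (p : Fin n → Option (Fin n)) :
    Finset (Fin n) :=
  s.filter (fun v => p v = none)

noncomputable def wt (s : Finset (Fin n)) (p : Fin n → Option (Fin n)) : ℚ :=
  ∏ v ∈ s, ((hookLen p v : ℚ))⁻¹

noncomputable def Z (t : ℕ) (s : Finset (Fin n)) : ℚ :=
  ∑ p ∈ forestsOn s, (t : ℚ) ^ (rootsOf s p).card * wt s p

/-- Ascending factorial. -/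
def af : ℕ → ℕ → ℕ
  | _, 0 => 1
  | t, (m+1) => t * af (t+1) m

lemma af_mul_factorial : ∀ (m t : ℕ), af (t+1) m * t.factorial = (t + m).factorial := by
  intro m
  induction m with
  | zero => simp [af]
  | succ m ih =>
    intro t
    have : af (t+1) (m+1) * t.factorial = af (t+2) m * (t+1).factorial := by
      rw [af]; rw [Nat.factorial_succ]; ring
    rw [this, ih (t+1)]
    congr 1
    omega

lemma af_one (m : ℕ) : af 1 m = m.factorial := by
  have := af_mul_factorial m 0
  simpa using this

lemma rtg_none_eq {p : Fin n → Option (Fin n)} {r v : Fin n} (hr : p r = none)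
    (h : ReflTransGen (parentRel p) r v) : r = v := by
  rcases h.cases_head with h | ⟨c, hc, _⟩
  · exact h
  · exact absurd (hr ▸ hc : (none : Option (Fin n)) = some c) (by simp)

lemma root_unique {p : Fin n → Option (Fin n)} {a b : Fin n} (hna : p a = none)
    (hnb : p b = none) :
    ∀ {v}, ReflTransGen (parentRel p) v a → ReflTransGen (parentRel p) v b → a = b := by
  intro v ha
  induction ha using ReflTransGen.head_induction_on with
  | refl => exact fun hb => rtg_none_eq hna hb
  | @head u c h h' ih =>
    intro hb
    rcases hb.cases_head with rfl | ⟨c', hc', hcb⟩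
    · exact absurd (hnb ▸ h : (none : Option (Fin n)) = some c) (by simp)
    · have : c = c' := by
        have := h.symm.trans hc'
        exact Option.some.inj this
      exact ih (this ▸ hcb)

lemma exists_root {p : Fin n → Option (Fin n)} (hf : IsRForest p) (v : Fin n) :
    ∃ r, ReflTransGen (parentRel p) v r ∧ p r = none := by
  have key : ∀ k (v : Fin n),
      (Finset.univ.filter (fun x => ReflTransGen (parentRel p) v x)).card ≤ k →
      ∃ r, ReflTransGen (parentRel p) v r ∧ p r = none := by
    intro k
    induction k with
    | zero =>
      intro v hv
      exfalso
      have : v ∈ Finset.univ.filter (fun x => ReflTransGen (parentRel p) v x) := by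
        simp [ReflTransGen.refl]
      have := Finset.card_pos.2 ⟨v, this⟩
      omega
    | succ k ih =>
      intro v hv
      cases hp : p v with
      | none => exact ⟨v, ReflTransGen.refl, hp⟩
      | some w =>
        have hvw : parentRel p v w := hp
        have hsub : (Finset.univ.filter (fun x => ReflTransGen (parentRel p) w x)) ⊆
            (Finset.univ.filter (fun x => ReflTransGen (parentRel p) v x)) := by
          intro x hx
          simp only [Finset.mem_filter, Finset.mem_univ, true_and] at hx ⊢
          exact ReflTransGen.head hvw hx
        have hvnot : v ∉ (Finset.univ.filter (fun x => ReflTransGen (parentRel p) w x)) := by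
          simp only [Finset.mem_filter, Finset.mem_univ, true_and]
          intro hwv
          exact hf v (TransGen.head' hvw hwv)
        have hss : (Finset.univ.filter (fun x => ReflTransGen (parentRel p) w x)) ⊂
            (Finset.univ.filter (fun x => ReflTransGen (parentRel p) v x)) := by
          refine ⟨hsub, fun h' => hvnot (h' ?_)⟩
          simp [ReflTransGen.refl]
        have hlt := Finset.card_lt_card hss
        obtain ⟨r, hr, hrn⟩ := ih w (by omega)
        exact ⟨r, ReflTransGen.head hvw hr, hrn⟩
  exact key _ v le_rfl

lemma hookLen_eq_card (p : Fin n → Option (Fin n)) (v : Fin n) :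
    hookLen p v = (Finset.univ.filter (fun u => ReflTransGen (parentRel p) u v)).card := by
  rw [hookLen, Nat.card_eq_fintype_card]
  convert Fintype.card_subtype (fun u => ReflTransGen (parentRel p) u v)

lemma sum_root_hooks {s : Finset (Fin n)} {p : Fin n → Option (Fin n)} (hp : ForestOn s p) :
    ∑ r ∈ rootsOf s p, hookLen p r = s.card := by
  classical
  set rt : Fin n → Fin n := fun v => (exists_root hp.2.2 v).choose with hrt_def
  have hrt : ∀ v, ReflTransGen (parentRel p) v (rt v) ∧ p (rt v) = none :=
    fun v => (exists_root hp.2.2 v).choose_spec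
  have hmem : ∀ v, v ∈ s → rt v ∈ rootsOf s p := by
    intro v hv
    have h1 := (hrt v).1
    have h2 := (hrt v).2
    rcases h1.cases_tail with h | ⟨c, _, hc⟩
    · rw [rootsOf, Finset.mem_filter]
      refine ⟨?_, h2⟩
      rw [h]; exact hv
    · have : rt v ∈ s := hp.2.1 c _ hc
      rw [rootsOf, Finset.mem_filter]; exact ⟨this, h2⟩
  have hcard := Finset.card_eq_sum_card_fiberwise hmem
  rw [hcard]
  apply Finset.sum_congr rfl
  intro r hr
  rw [rootsOf, Finset.mem_filter] at hr
  rw [hookLen_eq_card]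
  congr 1
  ext u
  simp only [Finset.mem_filter, Finset.mem_univ, true_and]
  constructor
  · intro hur
    have hus : u ∈ s := by
      rcases hur.cases_head with rfl | ⟨c, hc, _⟩
      · exact hr.1
      · by_contra hu
        exact absurd ((hp.1 u hu) ▸ hc : (none : Option (Fin n)) = some c) (by simp)
    exact ⟨hus, root_unique (hrt u).2 hr.2 (hrt u).1 hur⟩
  · rintro ⟨hus, rfl⟩
    exact (hrt u).1

/-- Transfer of reachability when edges into `r` are removed. -/
lemma rtg_iff {p p' : Fin n → Option (Fin n)} {r : Fin n} (hpr : p r = none)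
    (h : ∀ a b, p' a = some b ↔ (p a = some b ∧ b ≠ r)) {v : Fin n} (hv : v ≠ r) (u : Fin n) :
    ReflTransGen (parentRel p) u v ↔ ReflTransGen (parentRel p') u v := by
  constructor
  · intro hu
    induction hu using ReflTransGen.head_induction_on with
    | refl => exact ReflTransGen.refl
    | @head a c hac hcv ih =>
      have hcr : c ≠ r := by
        rintro rfl
        exact hv (rtg_none_eq hpr hcv).symm
      exact ReflTransGen.head ((h a c).2 ⟨hac, hcr⟩) ih
  · intro hu
    exact ReflTransGen.mono (fun a b hab => ((h a b).1 hab).1) _ _ hu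

lemma forest_of_del {p p' : Fin n → Option (Fin n)} {r : Fin n}
    (h : ∀ a b, p' a = some b ↔ (p a = some b ∧ b ≠ r)) (hf : IsRForest p) :
    IsRForest p' :=
  fun v hv => hf v (TransGen.mono (fun a b hab => ((h a b).1 hab).1) _ _ hv)

lemma forest_of_ins {p p' : Fin n → Option (Fin n)} {r : Fin n} (hpr : p r = none)
    (h : ∀ a b, p' a = some b ↔ (p a = some b ∧ b ≠ r)) (hf : IsRForest p') :
    IsRForest p := by
  have dich : ∀ a b, TransGen (parentRel p) a b →
      b = r ∨ TransGen (parentRel p') a b := by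
    intro a b htg
    induction htg with
    | single hab =>
      rename_i c
      by_cases hcr : c = r
      · exact Or.inl hcr
      · exact Or.inr (TransGen.single ((h _ _).2 ⟨hab, hcr⟩))
    | tail hab hbc ih =>
      rename_i b' c'
      rcases ih with rfl | ih
      · exact absurd (hpr ▸ hbc : (none : Option (Fin n)) = some c') (by simp)
      · by_cases hcr : c' = r
        · exact Or.inl hcr
        · exact Or.inr (TransGen.tail ih ((h _ _).2 ⟨hbc, hcr⟩))
  intro v hv
  rcases dich v v hv with rfl | hv'
  · obtain ⟨c, hc, -⟩ := (Relation.TransGen.head'_iff).mp hv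
    exact absurd (hpr ▸ hc : (none : Option (Fin n)) = some c) (by simp)
  · exact hf v hv'


noncomputable def del (r : Fin n) (p : Fin n → Option (Fin n)) : Fin n → Option (Fin n) :=
  fun v => if p v = some r then none else p v

noncomputable def ins (r : Fin n) (S : Finset (Fin n)) (p' : Fin n → Option (Fin n)) :
    Fin n → Option (Fin n) :=
  fun v => if v ∈ S then some r else p' v

lemma del_edge {r : Fin n} {p : Fin n → Option (Fin n)} (hpr : p r = none) :
    ∀ a b, (del r p) a = some b ↔ (p a = some b ∧ b ≠ r) := by
  intro a b
  unfold del
  by_cases h : p a = some r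
  · rw [if_pos h]
    constructor
    · intro h'; exact absurd h' (by simp)
    · rintro ⟨h1, h2⟩; exact absurd (Option.some.inj ((h.symm.trans h1))).symm h2
  · rw [if_neg h]
    constructor
    · intro h1; exact ⟨h1, by rintro rfl; exact h h1⟩
    · exact fun h1 => h1.1

lemma ins_edge {s : Finset (Fin n)} {r : Fin n} {p' : Fin n → Option (Fin n)}
    {S : Finset (Fin n)} (hp' : ForestOn (s.erase r) p') (hS : S ⊆ rootsOf (s.erase r) p') :
    ∀ a b, p' a = some b ↔ ((ins r S p') a = some b ∧ b ≠ r) := by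
  intro a b
  constructor
  · intro h1
    have haS : a ∉ S := by
      intro haS
      have := hS haS
      rw [rootsOf, Finset.mem_filter] at this
      rw [this.2] at h1; exact absurd h1 (by simp)
    have hbr : b ≠ r := by
      have := hp'.2.1 a b h1
      exact Finset.ne_of_mem_erase this
    exact ⟨by rw [ins, if_neg haS]; exact h1, hbr⟩
  · rintro ⟨h1, h2⟩
    rw [ins] at h1
    by_cases haS : a ∈ S
    · rw [if_pos haS] at h1
      exact absurd (Option.some.inj h1).symm h2
    · rw [if_neg haS] at h1; exact h1

lemma ins_root {s : Finset (Fin n)} {r : Fin n} {p' : Fin n → Option (Fin n)}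
    {S : Finset (Fin n)} (hp' : ForestOn (s.erase r) p') (hS : S ⊆ rootsOf (s.erase r) p') :
    (ins r S p') r = none := by
  have hrS : r ∉ S := by
    intro h
    exact Finset.notMem_erase r s (Finset.mem_filter.1 (hS h)).1
  rw [ins, if_neg hrS]
  exact hp'.1 r (Finset.notMem_erase r s)

lemma del_forestOn {s : Finset (Fin n)} {r : Fin n} {p : Fin n → Option (Fin n)}
    (hp : ForestOn s p) (hpr : p r = none) :
    ForestOn (s.erase r) (del r p) := by
  refine ⟨?_, ?_, forest_of_del (del_edge hpr) hp.2.2⟩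
  · intro v hv
    unfold del
    by_cases h : p v = some r
    · rw [if_pos h]
    · rw [if_neg h]
      by_cases hvr : v = r
      · rw [hvr]; exact hpr
      · exact hp.1 v (fun hvs => hv (Finset.mem_erase.2 ⟨hvr, hvs⟩))
  · intro v w h
    obtain ⟨h1, h2⟩ := (del_edge hpr v w).1 h
    exact Finset.mem_erase.2 ⟨h2, hp.2.1 v w h1⟩

lemma ins_forestOn {s : Finset (Fin n)} {r : Fin n} {p' : Fin n → Option (Fin n)}
    {S : Finset (Fin n)} (hr : r ∈ s) (hp' : ForestOn (s.erase r) p')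
    (hS : S ⊆ rootsOf (s.erase r) p') :
    ForestOn s (ins r S p') := by
  refine ⟨?_, ?_, forest_of_ins (ins_root hp' hS) (ins_edge hp' hS) hp'.2.2⟩
  · intro v hv
    have hvS : v ∉ S := fun h => hv (Finset.mem_of_mem_erase (Finset.mem_filter.1 (hS h)).1)
    rw [ins, if_neg hvS]
    exact hp'.1 v (fun h => hv (Finset.mem_of_mem_erase h))
  · intro v w h
    rw [ins] at h
    by_cases hvS : v ∈ S
    · rw [if_pos hvS] at h
      rw [← Option.some.inj h]; exact hr
    · rw [if_neg hvS] at h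
      exact Finset.mem_of_mem_erase (hp'.2.1 v w h)

lemma roots_ins {s : Finset (Fin n)} {r : Fin n} {p' : Fin n → Option (Fin n)}
    {S : Finset (Fin n)} (hr : r ∈ s) (hp' : ForestOn (s.erase r) p')
    (hS : S ⊆ rootsOf (s.erase r) p') :
    rootsOf s (ins r S p') = insert r ((rootsOf (s.erase r) p') \ S) := by
  ext v
  rw [rootsOf, Finset.mem_filter, Finset.mem_insert, Finset.mem_sdiff, rootsOf,
    Finset.mem_filter]
  constructor
  · rintro ⟨hvs, hv⟩
    by_cases hvr : v = r
    · exact Or.inl hvr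
    · refine Or.inr ⟨⟨Finset.mem_erase.2 ⟨hvr, hvs⟩, ?_⟩, ?_⟩
      · rw [ins] at hv
        by_cases hvS : v ∈ S
        · rw [if_pos hvS] at hv; exact absurd hv (by simp)
        · rw [if_neg hvS] at hv; exact hv
      · intro hvS
        rw [ins, if_pos hvS] at hv; exact absurd hv (by simp)
  · rintro (rfl | ⟨⟨hve, hv⟩, hvS⟩)
    · exact ⟨hr, ins_root hp' hS⟩
    · exact ⟨Finset.mem_of_mem_erase hve, by rw [ins, if_neg hvS]; exact hv⟩

lemma roots_ins_card {s : Finset (Fin n)} {r : Fin n} {p' : Fin n → Option (Fin n)}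
    {S : Finset (Fin n)} (hr : r ∈ s) (hp' : ForestOn (s.erase r) p')
    (hS : S ⊆ rootsOf (s.erase r) p') :
    (rootsOf s (ins r S p')).card = 1 + (rootsOf (s.erase r) p').card - S.card := by
  rw [roots_ins hr hp' hS, Finset.card_insert_of_notMem, Finset.card_sdiff_of_subset hS]
  · have := Finset.card_le_card hS
    omega
  · rw [Finset.mem_sdiff, rootsOf, Finset.mem_filter]
    rintro ⟨⟨h, -⟩, -⟩
    exact Finset.notMem_erase r s h

lemma hook_ins_eq {s : Finset (Fin n)} {r : Fin n} {p' : Fin n → Option (Fin n)}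
    {S : Finset (Fin n)} (hp' : ForestOn (s.erase r) p')
    (hS : S ⊆ rootsOf (s.erase r) p') {v : Fin n} (hv : v ≠ r) :
    hookLen (ins r S p') v = hookLen p' v := by
  rw [hookLen_eq_card, hookLen_eq_card]
  congr 1
  ext u
  simp only [Finset.mem_filter, Finset.mem_univ, true_and]
  exact rtg_iff (ins_root hp' hS) (ins_edge hp' hS) hv u

lemma del_ins {s : Finset (Fin n)} {r : Fin n} {p' : Fin n → Option (Fin n)}
    {S : Finset (Fin n)} (hp' : ForestOn (s.erase r) p')
    (hS : S ⊆ rootsOf (s.erase r) p') :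
    del r (ins r S p') = p' := by
  funext v
  rw [del, ins]
  by_cases hvS : v ∈ S
  · rw [if_pos hvS]
    rw [if_pos rfl]
    exact ((Finset.mem_filter.1 (hS hvS)).2).symm
  · rw [if_neg hvS]
    by_cases h : p' v = some r
    · exfalso
      have := hp'.2.1 v r h
      exact Finset.notMem_erase r s this
    · rw [if_neg h]

lemma ins_del {r : Fin n} {p : Fin n → Option (Fin n)} :
    ins r (Finset.univ.filter (fun c => p c = some r)) (del r p) = p := by
  funext v
  rw [ins]
  by_cases h : p v = some r
  · rw [if_pos (by simp [h]), h]
  · rw [if_neg (by simp [h]), del, if_neg h]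

lemma childSet_sub {s : Finset (Fin n)} {r : Fin n} {p : Fin n → Option (Fin n)}
    (hp : ForestOn s p) (hpr : p r = none) :
    (Finset.univ.filter (fun c => p c = some r)) ⊆ rootsOf (s.erase r) (del r p) := by
  intro c hc
  rw [Finset.mem_filter] at hc
  have hcs : c ∈ s := by
    by_contra h
    exact absurd ((hp.1 c h) ▸ hc.2 : (none : Option (Fin n)) = some r) (by simp)
  have hcr : c ≠ r := by
    intro hcr
    rw [hcr, hpr] at hc
    exact absurd hc.2 (by simp)
  rw [rootsOf, Finset.mem_filter]
  exact ⟨Finset.mem_erase.2 ⟨hcr, hcs⟩, by rw [del, if_pos hc.2]⟩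


lemma mem_forestsOn {s : Finset (Fin n)} {p : Fin n → Option (Fin n)} :
    p ∈ forestsOn s ↔ ForestOn s p := by
  rw [forestsOn, Finset.mem_filter]
  simp

lemma hook_del_eq {r : Fin n} {p : Fin n → Option (Fin n)} (hpr : p r = none) {v : Fin n}
    (hv : v ≠ r) : hookLen p v = hookLen (del r p) v := by
  rw [hookLen_eq_card, hookLen_eq_card]
  congr 1
  ext u
  simp only [Finset.mem_filter, Finset.mem_univ, true_and]
  exact rtg_iff hpr (del_edge hpr) hv u

lemma filter_ins {s : Finset (Fin n)} {r : Fin n} {p' : Fin n → Option (Fin n)}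
    {S : Finset (Fin n)} (hp' : ForestOn (s.erase r) p')
    (hS : S ⊆ rootsOf (s.erase r) p') :
    Finset.univ.filter (fun c => (ins r S p') c = some r) = S := by
  ext c
  simp only [Finset.mem_filter, Finset.mem_univ, true_and]
  constructor
  · intro h
    by_contra hcS
    rw [ins, if_neg hcS] at h
    exact Finset.notMem_erase r s (hp'.2.1 c r h)
  · intro h
    rw [ins, if_pos h]

lemma powerset_sum (t : ℕ) (A : Finset (Fin n)) :
    ∑ S ∈ A.powerset, (t : ℚ) ^ (A.card - S.card) = ((t : ℚ) + 1) ^ A.card := by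
  induction A using Finset.induction_on with
  | empty => simp
  | @insert a A ha ih =>
    have hinj : ∀ x ∈ A.powerset, ∀ y ∈ A.powerset, insert a x = insert a y → x = y := by
      intro x hx y hy hxy
      have hax : a ∉ x := fun h => ha (Finset.mem_powerset.1 hx h)
      have hay : a ∉ y := fun h => ha (Finset.mem_powerset.1 hy h)
      rw [← Finset.erase_insert hax, ← Finset.erase_insert hay, hxy]
    have hdisj : Disjoint A.powerset (A.powerset.image (insert a)) := by
      rw [Finset.disjoint_left]
      intro S hS hS'
      rw [Finset.mem_image] at hS'
      obtain ⟨S', -, rfl⟩ := hS'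
      exact ha (Finset.mem_powerset.1 hS (Finset.mem_insert_self a S'))
    rw [Finset.powerset_insert, Finset.sum_union hdisj, Finset.sum_image hinj,
      Finset.card_insert_of_notMem ha]
    have h1 : ∀ S ∈ A.powerset,
        (t:ℚ) ^ (A.card + 1 - S.card) = t * (t:ℚ) ^ (A.card - S.card) := by
      intro S hS
      have := Finset.card_le_card (Finset.mem_powerset.1 hS)
      rw [show A.card + 1 - S.card = (A.card - S.card) + 1 by omega, pow_succ]
      ring
    have h2 : ∀ S ∈ A.powerset,
        (t:ℚ) ^ (A.card + 1 - (insert a S).card) = (t:ℚ) ^ (A.card - S.card) := by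
      intro S hS
      have haS : a ∉ S := fun h => ha (Finset.mem_powerset.1 hS h)
      rw [Finset.card_insert_of_notMem haS]
      congr 1
      omega
    rw [Finset.sum_congr rfl h1, Finset.sum_congr rfl h2, ← Finset.mul_sum, ih, pow_succ]
    ring

lemma inner_sum {s : Finset (Fin n)} {r : Fin n} (hr : r ∈ s) (t : ℕ) :
    ∑ p ∈ (forestsOn s).filter (fun p => p r = none),
      (t : ℚ) ^ (rootsOf s p).card * ∏ v ∈ s.erase r, ((hookLen p v : ℚ))⁻¹
    = ∑ p' ∈ forestsOn (s.erase r),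
        ((t : ℚ) * ((t : ℚ) + 1) ^ (rootsOf (s.erase r) p').card) * wt (s.erase r) p' := by
  have main :
      ∑ p ∈ (forestsOn s).filter (fun p => p r = none),
        (t : ℚ) ^ (rootsOf s p).card * ∏ v ∈ s.erase r, ((hookLen p v : ℚ))⁻¹
      = ∑ x ∈ (forestsOn (s.erase r)).sigma (fun p' => (rootsOf (s.erase r) p').powerset),
          (t : ℚ) ^ (1 + (rootsOf (s.erase r) x.1).card - x.2.card) * wt (s.erase r) x.1 := by
    refine Finset.sum_bij'
      (fun p _ => (⟨del r p, Finset.univ.filter (fun c => p c = some r)⟩ :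
        Σ _ : Fin n → Option (Fin n), Finset (Fin n)))
      (fun x _ => ins r x.2 x.1) ?_ ?_ ?_ ?_ ?_
    · intro p hp
      rw [Finset.mem_filter] at hp
      have hp1 := mem_forestsOn.1 hp.1
      exact Finset.mem_sigma.2 ⟨mem_forestsOn.2 (del_forestOn hp1 hp.2),
        Finset.mem_powerset.2 (childSet_sub hp1 hp.2)⟩
    · rintro ⟨p', S⟩ hx
      rw [Finset.mem_sigma] at hx
      have h1 := mem_forestsOn.1 hx.1
      have h2 := Finset.mem_powerset.1 hx.2
      exact Finset.mem_filter.2 ⟨mem_forestsOn.2 (ins_forestOn hr h1 h2), ins_root h1 h2⟩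
    · intro p hp
      exact ins_del
    · rintro ⟨p', S⟩ hx
      rw [Finset.mem_sigma] at hx
      have h1 := mem_forestsOn.1 hx.1
      have h2 := Finset.mem_powerset.1 hx.2
      have e1 := del_ins h1 h2
      have e2 := filter_ins h1 h2
      simp only [e1, e2]
    · intro p hp
      rw [Finset.mem_filter] at hp
      have hp1 := mem_forestsOn.1 hp.1
      have hcard : (rootsOf s p).card
          = 1 + (rootsOf (s.erase r) (del r p)).card
            - (Finset.univ.filter (fun c => p c = some r)).card := by
        have h := roots_ins_card hr (del_forestOn hp1 hp.2) (childSet_sub hp1 hp.2)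
        rwa [ins_del] at h
      rw [hcard, wt]
      congr 1
      apply Finset.prod_congr rfl
      intro v hv
      rw [hook_del_eq hp.2 (Finset.mem_erase.1 hv).1]
  rw [main, Finset.sum_sigma]
  apply Finset.sum_congr rfl
  intro p' hp'
  dsimp only
  rw [← Finset.sum_mul]
  congr 1
  have hstep : ∀ S ∈ (rootsOf (s.erase r) p').powerset,
      (t:ℚ) ^ (1 + (rootsOf (s.erase r) p').card - S.card)
        = t * (t:ℚ) ^ ((rootsOf (s.erase r) p').card - S.card) := by
    intro S hS
    have := Finset.card_le_card (Finset.mem_powerset.1 hS)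
    rw [show 1 + (rootsOf (s.erase r) p').card - S.card
        = ((rootsOf (s.erase r) p').card - S.card) + 1 by omega, pow_succ]
    ring
  rw [Finset.sum_congr rfl hstep, ← Finset.mul_sum, powerset_sum]

lemma Z_empty (t : ℕ) : Z t (∅ : Finset (Fin n)) = 1 := by
  have hfe : forestsOn (∅ : Finset (Fin n)) = {fun _ => none} := by
    ext p
    rw [mem_forestsOn, Finset.mem_singleton]
    constructor
    · intro hp
      funext v
      exact hp.1 v (Finset.notMem_empty v)
    · rintro rfl
      refine ⟨fun v _ => rfl, fun v w h => by simp at h, fun v hv => ?_⟩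
      obtain ⟨c, hc, -⟩ := (Relation.TransGen.head'_iff).mp hv
      exact absurd hc (by simp [parentRel])
  rw [Z, hfe, Finset.sum_singleton, rootsOf, wt]
  simp

lemma Z_eq : ∀ (m : ℕ) (t : ℕ) (s : Finset (Fin n)), s.card = m → Z t s = (af t m : ℚ) := by
  intro m
  induction m with
  | zero =>
    intro t s hs
    rw [Finset.card_eq_zero.1 hs, Z_empty]
    simp [af]
  | succ m ih =>
    intro t s hs
    have hcancel : ((m : ℚ) + 1) ≠ 0 := by positivity
    apply mul_left_cancel₀ hcancel
    calc ((m : ℚ) + 1) * Z t s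
        = ∑ p ∈ forestsOn s, ((m:ℚ)+1) * ((t : ℚ) ^ (rootsOf s p).card * wt s p) := by
          rw [Z, Finset.mul_sum]
      _ = ∑ p ∈ forestsOn s, ∑ r ∈ rootsOf s p,
            (t : ℚ) ^ (rootsOf s p).card * ∏ v ∈ s.erase r, ((hookLen p v : ℚ))⁻¹ := by
          apply Finset.sum_congr rfl
          intro p hp
          have hforest := mem_forestsOn.1 hp
          have hm : ∑ r ∈ rootsOf s p, (hookLen p r : ℚ) = (m:ℚ)+1 := by
            rw [← Nat.cast_sum, sum_root_hooks hforest, hs]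
            push_cast
            ring
          rw [← hm, Finset.sum_mul]
          apply Finset.sum_congr rfl
          intro r hr
          have hrs : r ∈ s := (Finset.mem_filter.1 hr).1
          have hwt : (hookLen p r : ℚ) * wt s p
              = ∏ v ∈ s.erase r, ((hookLen p v : ℚ))⁻¹ := by
            rw [wt, ← Finset.mul_prod_erase s _ hrs, ← mul_assoc,
              mul_inv_cancel₀ (Nat.cast_ne_zero.2 (hookLen_pos p r).ne'), one_mul]
          rw [← hwt]
          ring
      _ = ∑ r ∈ s, ∑ p ∈ (forestsOn s).filter (fun p => p r = none),
            (t : ℚ) ^ (rootsOf s p).card * ∏ v ∈ s.erase r, ((hookLen p v : ℚ))⁻¹ := by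
          have e1 : ∀ p ∈ forestsOn s,
              ∑ r ∈ rootsOf s p,
                (t : ℚ) ^ (rootsOf s p).card * ∏ v ∈ s.erase r, ((hookLen p v : ℚ))⁻¹
              = ∑ r ∈ s, if p r = none then
                  (t : ℚ) ^ (rootsOf s p).card * ∏ v ∈ s.erase r, ((hookLen p v : ℚ))⁻¹
                else 0 := fun p _ => Finset.sum_filter _ _
          rw [Finset.sum_congr rfl e1, Finset.sum_comm]
          apply Finset.sum_congr rfl
          intro r hr
          rw [Finset.sum_filter]
      _ = ∑ r ∈ s, (t:ℚ) * (af (t+1) m : ℚ) := by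
          apply Finset.sum_congr rfl
          intro r hr
          rw [inner_sum hr t]
          have hz : ∑ p' ∈ forestsOn (s.erase r),
              ((t : ℚ) * ((t : ℚ) + 1) ^ (rootsOf (s.erase r) p').card) * wt (s.erase r) p'
              = (t:ℚ) * Z (t+1) (s.erase r) := by
            rw [Z, Finset.mul_sum]
            apply Finset.sum_congr rfl
            intro p' _
            push_cast
            ring
          rw [hz, ih (t+1) (s.erase r)
            (by rw [Finset.card_erase_of_mem hr, hs]; omega)]
      _ = ((m : ℚ) + 1) * (af t (m+1) : ℚ) := by
          rw [Finset.sum_const, hs, af]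
          push_cast
          ring


lemma tree_forestOn {p : Fin n → Option (Fin n)} (hp : IsRTree p) :
    ForestOn (Finset.univ : Finset (Fin n)) p :=
  ⟨fun v hv => absurd (Finset.mem_univ v) hv, fun _ w _ => Finset.mem_univ w, hp.1⟩

lemma tree_hook_root {p : Fin n → Option (Fin n)} (hp : IsRTree p) {r : Fin n}
    (hr : p r = none) : hookLen p r = n := by
  rw [hookLen_eq_card]
  have huniv : Finset.univ.filter (fun u => ReflTransGen (parentRel p) u r)
      = (Finset.univ : Finset (Fin n)) := by
    ext u
    simp only [Finset.mem_filter, Finset.mem_univ, true_and, iff_true]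
    obtain ⟨r', hr1, hr2⟩ := exists_root hp.1 u
    have : r' = r := hp.2.unique hr2 hr
    rwa [this] at hr1
  rw [huniv]
  simp

end HookAux

open HookAux in

/-- The hook length formula for labeled rooted trees. -/
theorem hook_formula_labeled_trees (n : ℕ) (hn : 1 ≤ n) :
    ∑ᶠ p : {p : Fin n → Option (Fin n) // IsRTree p},
      ∏ v : Fin n, 1 / (hookLen (p : Fin n → Option (Fin n)) v : ℚ)
    = ((n - 1).factorial : ℚ) := by
  classical
  have h0 : ∑ᶠ p : {p : Fin n → Option (Fin n) // IsRTree p},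
      ∏ v : Fin n, 1 / (hookLen (p : Fin n → Option (Fin n)) v : ℚ)
      = ∑ p ∈ Finset.univ.filter (fun p : Fin n → Option (Fin n) => IsRTree p),
          ∏ v : Fin n, 1 / (hookLen p v : ℚ) := by
    rw [finsum_eq_sum_of_fintype]
    exact (Finset.sum_subtype _ (fun x => ⟨fun h => (Finset.mem_filter.1 h).2,
      fun h => Finset.mem_filter.2 ⟨Finset.mem_univ x, h⟩⟩)
      (fun p => ∏ v : Fin n, 1 / (hookLen p v : ℚ))).symm
  rw [h0]
  set T := Finset.univ.filter (fun p : Fin n → Option (Fin n) => IsRTree p) with hT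
  set i0 : Fin n := ⟨0, hn⟩ with hi0
  set g : (Fin n → Option (Fin n)) → Fin n :=
    fun p => if h : ∃ r, p r = none then h.choose else i0 with hg
  have hmaps : ∀ p ∈ T, g p ∈ (Finset.univ : Finset (Fin n)) := fun _ _ => Finset.mem_univ _
  rw [← Finset.sum_fiberwise_of_maps_to hmaps (fun p => ∏ v : Fin n, 1 / (hookLen p v : ℚ))]
  have hfib : ∀ r : Fin n, T.filter (fun p => g p = r) = T.filter (fun p => p r = none) := by
    intro r
    ext p
    rw [Finset.mem_filter, Finset.mem_filter, hT, Finset.mem_filter, Finset.mem_filter]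
    simp only [Finset.mem_univ, true_and]
    constructor
    · rintro ⟨hp, rfl⟩
      refine ⟨hp, ?_⟩
      have hex : ∃ r', p r' = none := hp.2.exists
      show p (if h : ∃ r', p r' = none then h.choose else i0) = none
      rw [dif_pos hex]
      exact hex.choose_spec
    · rintro ⟨hp, hpr⟩
      refine ⟨hp, ?_⟩
      have hex : ∃ r', p r' = none := ⟨r, hpr⟩
      show (if h : ∃ r', p r' = none then h.choose else i0) = r
      rw [dif_pos hex]
      exact hp.2.unique hex.choose_spec hpr
  have hn' : ((n : ℚ)) ≠ 0 := by
    have : 0 < n := hn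
    positivity
  have hper : ∀ r : Fin n, ∑ p ∈ T.filter (fun p => g p = r), ∏ v : Fin n,
      1 / (hookLen p v : ℚ) = (n:ℚ)⁻¹ * ((n - 1).factorial : ℚ) := by
    intro r
    rw [hfib r]
    have hbij : ∑ p ∈ T.filter (fun p => p r = none), ∏ v : Fin n, 1 / (hookLen p v : ℚ)
        = ∑ p' ∈ forestsOn ((Finset.univ : Finset (Fin n)).erase r),
            (n:ℚ)⁻¹ * wt ((Finset.univ : Finset (Fin n)).erase r) p' := by
      refine Finset.sum_bij' (fun p _ => del r p)
        (fun p' _ => ins r (rootsOf ((Finset.univ : Finset (Fin n)).erase r) p') p')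
        ?_ ?_ ?_ ?_ ?_
      · intro p hp
        rw [Finset.mem_filter, hT, Finset.mem_filter] at hp
        exact mem_forestsOn.2 (del_forestOn (tree_forestOn hp.1.2) hp.2)
      · intro p' hp'
        have h1 := mem_forestsOn.1 hp'
        have hroot := ins_root h1 (Finset.Subset.refl _)
        have hforest := ins_forestOn (Finset.mem_univ r) h1 (Finset.Subset.refl _)
        rw [Finset.mem_filter, hT, Finset.mem_filter]
        refine ⟨⟨Finset.mem_univ _, hforest.2.2, r, hroot, ?_⟩, hroot⟩
        intro v hv
        by_contra hvr
        by_cases hvS : v ∈ rootsOf ((Finset.univ : Finset (Fin n)).erase r) p'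
        · simp only [ins, if_pos hvS] at hv
          exact absurd hv (by simp)
        · simp only [ins, if_neg hvS] at hv
          exact hvS (Finset.mem_filter.2 ⟨Finset.mem_erase.2 ⟨hvr, Finset.mem_univ v⟩, hv⟩)
      · intro p hp
        rw [Finset.mem_filter, hT, Finset.mem_filter] at hp
        have htree := hp.1.2
        have hpr := hp.2
        funext v
        by_cases hvr : v = r
        · rw [hvr, ins_root (del_forestOn (tree_forestOn htree) hpr) (Finset.Subset.refl _),
            hpr]
        · by_cases hpv : p v = some r
          · have hvS : v ∈ rootsOf ((Finset.univ : Finset (Fin n)).erase r) (del r p) := by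
              rw [rootsOf, Finset.mem_filter]
              refine ⟨Finset.mem_erase.2 ⟨hvr, Finset.mem_univ v⟩, ?_⟩
              simp only [del, if_pos hpv]
            simp only [ins, if_pos hvS, hpv]
          · have hpvn : p v ≠ none := by
              intro hvn
              exact hvr (htree.2.unique hvn hpr)
            have hvS : v ∉ rootsOf ((Finset.univ : Finset (Fin n)).erase r) (del r p) := by
              rw [rootsOf, Finset.mem_filter]
              rintro ⟨-, h⟩
              simp only [del, if_neg hpv] at h
              exact hpvn h
            simp only [ins, if_neg hvS, del, if_neg hpv]
      · intro p' hp'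
        exact del_ins (mem_forestsOn.1 hp') (Finset.Subset.refl _)
      · intro p hp
        rw [Finset.mem_filter, hT, Finset.mem_filter] at hp
        have htree := hp.1.2
        have hpr := hp.2
        simp only [one_div]
        rw [← Finset.mul_prod_erase Finset.univ (fun v => ((hookLen p v : ℚ))⁻¹)
          (Finset.mem_univ r), tree_hook_root htree hpr, wt]
        congr 1
        apply Finset.prod_congr rfl
        intro v hv
        rw [hook_del_eq hpr (Finset.mem_erase.1 hv).1]
    rw [hbij, ← Finset.mul_sum]
    congr 1
    have hzz : ∑ p' ∈ forestsOn ((Finset.univ : Finset (Fin n)).erase r),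
        wt ((Finset.univ : Finset (Fin n)).erase r) p'
        = Z 1 ((Finset.univ : Finset (Fin n)).erase r) := by
      rw [Z]
      apply Finset.sum_congr rfl
      intro p' _
      simp
    rw [hzz, Z_eq (n-1) 1 _ (by
        rw [Finset.card_erase_of_mem (Finset.mem_univ r), Finset.card_univ,
          Fintype.card_fin]), af_one]
  rw [Finset.sum_congr rfl (fun r _ => hper r), Finset.sum_const, Finset.card_univ,
    Fintype.card_fin, nsmul_eq_mul]
  rw [← mul_assoc, mul_inv_cancel₀ hn', one_mul]
end
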